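/- arXiv:1807.09843 — 5 statements merged into one kernel-verified Lean document; each statement's English description precedes it below -/
import Mathlib

section
/- Let (g, δ) be a Lie bialgebra and t ∈ ∧²g a twisting element, i.e. δ(t) + (1/2)[t,t] = 0 (where δ is extended as a derivation to ∧²g and [t,t] ∈ ∧³g is the algebraic Schouten bracket). Then the map δ_t(x) = δ(x) + [t, x] (with [t,x] = −ad_x(t)) is again a Lie bialgebra structure on g, i.e. δ_t is a 1-cocycle and its dual map is a Lie bracket on g*. -/
/- STATEMENT 2: Twisting a Lie bialgebra (g, δ) by a twisting element t ∈ ∧²g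
(with δ(t) + (1/2)[t,t] = 0) yields again a Lie bialgebra structure
δ_t(x) = δ(x) + [t,x] = δ(x) − ad_x(t). -/

open TensorProduct

section defs

variable (K : Type*) [Field K] [CharZero K]
variable (L : Type*) [LieRing L] [LieAlgebra K L]

attribute [local instance 100] LieRing.ofAssociativeRing

/-- `adT t : z ↦ ⁅z, t⁆`, the adjoint action of `L` on `L ⊗ L` with `t` fixed. -/
noncomputable def adT (t : L ⊗[K] L) : L →ₗ[K] L ⊗[K] L :=
  (LieModule.toEnd K L (L ⊗[K] L)).toLinearMap.flip t

/-- the cyclic permutation `a ⊗ b ⊗ c ↦ b ⊗ c ⊗ a` of `L ⊗ L ⊗ L`. -/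
noncomputable def cyc : L ⊗[K] (L ⊗[K] L) →ₗ[K] L ⊗[K] (L ⊗[K] L) :=
  (TensorProduct.assoc K L L L).toLinearMap ∘ₗ (TensorProduct.comm K L (L ⊗[K] L)).toLinearMap

/-- the transposition of the last two factors of `L ⊗ L ⊗ L`. -/
noncomputable def tau23 : L ⊗[K] (L ⊗[K] L) →ₗ[K] L ⊗[K] (L ⊗[K] L) :=
  LinearMap.lTensor L (TensorProduct.comm K L L).toLinearMap

/-- the antisymmetrizer `Σ_{σ ∈ S₃} sgn(σ) σ` of `L ⊗ L ⊗ L`. -/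
noncomputable def Alt3 : L ⊗[K] (L ⊗[K] L) →ₗ[K] L ⊗[K] (L ⊗[K] L) :=
  LinearMap.id + cyc K L + cyc K L ∘ₗ cyc K L
    - tau23 K L - tau23 K L ∘ₗ cyc K L - tau23 K L ∘ₗ cyc K L ∘ₗ cyc K L

/-- `(δ ⊗ id)` reassociated to land in `L ⊗ (L ⊗ L)`. -/
noncomputable def Dmap (δ : L →ₗ[K] L ⊗[K] L) : L ⊗[K] L →ₗ[K] L ⊗[K] (L ⊗[K] L) :=
  (TensorProduct.assoc K L L L).toLinearMap ∘ₗ LinearMap.rTensor L δ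

/-- co-Jacobi identity for a cobracket `δ`: the cyclic sum of `(δ ⊗ id) ∘ δ` vanishes;
equivalently the dual map of `δ` is a Lie bracket on the dual space. -/
def coJacobi (δ : L →ₗ[K] L ⊗[K] L) : Prop :=
  ∀ z : L, Dmap K L δ (δ z) + cyc K L (Dmap K L δ (δ z))
    + cyc K L (cyc K L (Dmap K L δ (δ z))) = 0

/-- skew-symmetry of a cobracket: `δ` takes values in `∧²g ⊂ g ⊗ g`. -/
def skewCobracket (δ : L →ₗ[K] L ⊗[K] L) : Prop :=
  ∀ z : L, TensorProduct.comm K L L (δ z) = - δ z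

/-- the 1-cocycle condition for `δ`. -/
def cocycle (δ : L →ₗ[K] L ⊗[K] L) : Prop :=
  ∀ z w : L, δ ⁅z, w⁆ = ⁅z, δ w⁆ - ⁅w, δ z⁆

/-- the classical Yang–Baxter expression `[t₁₂,t₁₃] + [t₁₂,t₂₃] + [t₁₃,t₂₃]` of an element
with components `t = Σ_p c p ⊗ d p`. -/
noncomputable def cyb {κ : Type*} [Fintype κ] (c d : κ → L) : L ⊗[K] (L ⊗[K] L) :=
  ∑ p, ∑ q, (⁅c p, c q⁆ ⊗ₜ[K] (d p ⊗ₜ[K] d q) + c p ⊗ₜ[K] (⁅d p, c q⁆ ⊗ₜ[K] d q)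
    + c p ⊗ₜ[K] (c q ⊗ₜ[K] ⁅d p, d q⁆))

end defs


set_option linter.unusedSectionVars false
section aux
variable {K : Type*} [Field K] [CharZero K]
variable {L : Type*} [LieRing L] [LieAlgebra K L]

lemma lie_sum' {M : Type*} [AddCommGroup M] [LieRingModule L M]
    (z : L) {α : Type*} (S : Finset α) (f : α → M) : ⁅z, ∑ i ∈ S, f i⁆ = ∑ i ∈ S, ⁅z, f i⁆ := by
  classical
  induction S using Finset.induction with
  | empty => simp
  | insert _ _ h ih => rw [Finset.sum_insert h, Finset.sum_insert h, lie_add, ih]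

@[simp] lemma cyc_tmul (x y w : L) :
    cyc K L (x ⊗ₜ[K] (y ⊗ₜ[K] w)) = y ⊗ₜ[K] (w ⊗ₜ[K] x) := by
  simp [cyc]

@[simp] lemma tau23_tmul (x y w : L) :
    tau23 K L (x ⊗ₜ[K] (y ⊗ₜ[K] w)) = x ⊗ₜ[K] (w ⊗ₜ[K] y) := by
  simp [tau23]

@[simp] lemma adT_apply (t : L ⊗[K] L) (z : L) : adT K L t z = ⁅z, t⁆ := rfl

lemma cyc_lie (z : L) (s : L ⊗[K] (L ⊗[K] L)) : cyc K L ⁅z, s⁆ = ⁅z, cyc K L s⁆ := by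
  induction s using TensorProduct.induction_on with
  | zero => simp
  | tmul x m =>
    induction m using TensorProduct.induction_on with
    | zero => simp
    | tmul y w =>
      simp [TensorProduct.LieModule.lie_tmul_right, tmul_add, add_tmul]
      abel
    | add u v hu hv =>
      simp only [tmul_add, lie_add, map_add, hu, hv]
  | add u v hu hv => rw [lie_add, map_add, map_add, lie_add, hu, hv]

lemma tau23_lie (z : L) (s : L ⊗[K] (L ⊗[K] L)) : tau23 K L ⁅z, s⁆ = ⁅z, tau23 K L s⁆ := by
  induction s using TensorProduct.induction_on with
  | zero => simp
  | tmul x m =>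
    induction m using TensorProduct.induction_on with
    | zero => simp
    | tmul y w =>
      simp [TensorProduct.LieModule.lie_tmul_right, tmul_add, add_tmul]
      abel
    | add u v hu hv =>
      simp only [tmul_add, lie_add, map_add, hu, hv]
  | add u v hu hv => rw [lie_add, map_add, map_add, lie_add, hu, hv]

lemma comm_lie (z : L) (s : L ⊗[K] L) :
    TensorProduct.comm K L L ⁅z, s⁆ = ⁅z, TensorProduct.comm K L L s⁆ := by
  induction s using TensorProduct.induction_on with
  | zero => simp
  | tmul x y => simp [TensorProduct.LieModule.lie_tmul_right]; abel
  | add u v hu hv => rw [lie_add, map_add, map_add, lie_add, hu, hv]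

end aux

set_option linter.unusedSectionVars false
set_option maxHeartbeats 1000000
section aux2
variable (K : Type*) [Field K] [CharZero K]
variable (L : Type*) [LieRing L] [LieAlgebra K L]

/-- the cyclic symmetrizer as a linear map -/
noncomputable def Pmap : L ⊗[K] (L ⊗[K] L) →ₗ[K] L ⊗[K] (L ⊗[K] L) :=
  LinearMap.id + cyc K L + cyc K L ∘ₗ cyc K L

/-- `asrv w : u ↦ assoc (u ⊗ w)` -/
noncomputable def asrv (w : L) : L ⊗[K] L →ₗ[K] L ⊗[K] (L ⊗[K] L) :=
  (TensorProduct.assoc K L L L).toLinearMap ∘ₗ (TensorProduct.mk K (L ⊗[K] L) L).flip w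

variable {K L}

lemma Pmap_apply (u : L ⊗[K] (L ⊗[K] L)) :
    Pmap K L u = u + cyc K L u + cyc K L (cyc K L u) := rfl

@[simp] lemma asrv_tmul (w x y : L) : asrv K L w (x ⊗ₜ[K] y) = x ⊗ₜ[K] (y ⊗ₜ[K] w) := rfl

lemma Pmap_lie (z : L) (s : L ⊗[K] (L ⊗[K] L)) : Pmap K L ⁅z, s⁆ = ⁅z, Pmap K L s⁆ := by
  simp only [Pmap_apply, cyc_lie, lie_add]

lemma skew_apply_eq_zero {M : Type*} [AddCommGroup M] [Module K M]
    (G : L ⊗[K] L →ₗ[K] M) (hG : ∀ x y : L, G (y ⊗ₜ[K] x) = G (x ⊗ₜ[K] y))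
    (u : L ⊗[K] L) (hu : TensorProduct.comm K L L u = -u) : G u = 0 := by
  have h1 : G ∘ₗ (TensorProduct.comm K L L).toLinearMap = G :=
    TensorProduct.ext' fun x y => by simpa using hG x y
  have h2 : G (TensorProduct.comm K L L u) = G u := by
    conv_rhs => rw [← h1]
    rfl
  rw [hu, map_neg] at h2
  have h3 : (2 : K) • G u = 0 := by
    rw [two_smul]
    nth_rewrite 1 [← h2]
    exact neg_add_cancel _
  rcases smul_eq_zero.mp h3 with h | h
  · exact absurd h two_ne_zero
  · exact h

lemma dagger (v : L ⊗[K] L) (hv : TensorProduct.comm K L L v = -v) (w : L) :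
    Alt3 K L (asrv K L w v) = (2 : K) • Pmap K L (asrv K L w v) := by
  have : (Alt3 K L ∘ₗ asrv K L w - (2 : K) • (Pmap K L ∘ₗ asrv K L w)) v = 0 := by
    apply skew_apply_eq_zero _ _ _ hv
    intro x y
    simp only [LinearMap.sub_apply, LinearMap.smul_apply, LinearMap.coe_comp,
      Function.comp_apply, asrv_tmul, Alt3, Pmap, LinearMap.add_apply, LinearMap.id_apply,
      cyc_tmul, tau23_tmul, smul_add, two_smul]
    abel
  have h2 := sub_eq_zero.mp (by simpa using this)
  simpa using h2
end aux2

section aux3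
variable {K : Type*} [Field K] [CharZero K]
variable {L : Type*} [LieRing L] [LieAlgebra K L]

variable {ι : Type*} [Fintype ι]

/-- sum over the cyclic orbit of a pure tensor -/
noncomputable def orb3 (K : Type*) [Field K] (L : Type*) [LieRing L] [LieAlgebra K L]
    (u v w : L) : L ⊗[K] (L ⊗[K] L) :=
  u ⊗ₜ[K] (v ⊗ₜ[K] w) + v ⊗ₜ[K] (w ⊗ₜ[K] u) + w ⊗ₜ[K] (u ⊗ₜ[K] v)

/-- first components of `t` -/
def cc (a b : ι → L) : ι ⊕ ι → L := Sum.elim a fun i => -(b i)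
/-- second components of `t` -/
def dd (a b : ι → L) : ι ⊕ ι → L := Sum.elim b a

@[simp] lemma cc_inl (a b : ι → L) (i : ι) : cc a b (Sum.inl i) = a i := rfl
@[simp] lemma cc_inr (a b : ι → L) (i : ι) : cc a b (Sum.inr i) = -(b i) := rfl
@[simp] lemma dd_inl (a b : ι → L) (i : ι) : dd a b (Sum.inl i) = b i := rfl
@[simp] lemma dd_inr (a b : ι → L) (i : ι) : dd a b (Sum.inr i) = a i := rfl

lemma lie_asrv (z w : L) (u : L ⊗[K] L) :
    ⁅z, asrv K L w u⁆ = asrv K L w ⁅z, u⁆ + asrv K L ⁅z, w⁆ u := by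
  induction u using TensorProduct.induction_on with
  | zero => simp
  | tmul x y =>
    simp [TensorProduct.LieModule.lie_tmul_right, tmul_add, add_tmul]
    abel
  | add u v hu hv => simp only [lie_add, map_add, hu, hv]; abel

section withT
variable (a b : ι → L) (t : L ⊗[K] L)
  (ht : t = ∑ i, (a i ⊗ₜ[K] b i - b i ⊗ₜ[K] a i))

include ht

lemma htc : t = ∑ p : ι ⊕ ι, cc a b p ⊗ₜ[K] dd a b p := by
  rw [ht, Fintype.sum_sum_type]
  simp [neg_tmul, sub_eq_add_neg, Finset.sum_add_distrib, Finset.sum_neg_distrib]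

lemma hcommt : TensorProduct.comm K L L t = -t := by
  rw [htc a b t ht, map_sum, ← Equiv.sum_comp (Equiv.sumComm ι ι)
    (fun p => TensorProduct.comm K L L (cc a b p ⊗ₜ[K] dd a b p)), ← Finset.sum_neg_distrib]
  refine Finset.sum_congr rfl fun p _ => ?_
  rcases p with i | i <;> simp [neg_tmul, tmul_neg]

lemma hlie_t (x : L) :
    ⁅x, t⁆ = ∑ p : ι ⊕ ι, (⁅x, cc a b p⁆ ⊗ₜ[K] dd a b p + cc a b p ⊗ₜ[K] ⁅x, dd a b p⁆) := by
  rw [htc a b t ht, lie_sum']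
  exact Finset.sum_congr rfl fun p _ => by
    simp [TensorProduct.LieModule.lie_tmul_right]

end withT

lemma Dmap_tmul (φ : L →ₗ[K] L ⊗[K] L) (x y : L) :
    Dmap K L φ (x ⊗ₜ[K] y) = asrv K L y (φ x) := by
  simp [Dmap, asrv]

end aux3

section aux4
variable {K : Type*} [Field K] [CharZero K]
variable {L : Type*} [LieRing L] [LieAlgebra K L]
variable {ι : Type*} [Fintype ι]

section withT
variable (a b : ι → L) (t : L ⊗[K] L)
  (ht : t = ∑ i, (a i ⊗ₜ[K] b i - b i ⊗ₜ[K] a i))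

include ht

lemma hDt (δ : L →ₗ[K] L ⊗[K] L) :
    Dmap K L δ t = ∑ p : ι ⊕ ι, asrv K L (dd a b p) (δ (cc a b p)) := by
  rw [htc a b t ht, map_sum]
  exact Finset.sum_congr rfl fun p _ => Dmap_tmul δ _ _

lemma keyM1 (δ : L →ₗ[K] L ⊗[K] L) (hcoc : cocycle K L δ) (z : L) :
    Dmap K L δ ⁅z, t⁆ = ⁅z, Dmap K L δ t⁆
      - ∑ p : ι ⊕ ι, asrv K L (dd a b p) ⁅cc a b p, δ z⁆ := by
  rw [hlie_t a b t ht z, map_sum, hDt a b t ht δ, lie_sum', ← Finset.sum_sub_distrib]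
  refine Finset.sum_congr rfl fun p _ => ?_
  rw [map_add, Dmap_tmul, Dmap_tmul, hcoc z (cc a b p), map_sub, lie_asrv]
  abel

end withT

lemma auxA1' (a b : ι → L) (x y : L) :
    ∑ p : ι ⊕ ι, orb3 K L (cc a b p) ⁅x, dd a b p⁆ y
      = ∑ p : ι ⊕ ι, orb3 K L ⁅cc a b p, x⁆ y (dd a b p) := by
  simp only [orb3]
  rw [← Equiv.sum_comp (Equiv.sumComm ι ι) (fun p => cc a b p ⊗ₜ[K] (⁅x, dd a b p⁆ ⊗ₜ[K] y)
        + ⁅x, dd a b p⁆ ⊗ₜ[K] (y ⊗ₜ[K] cc a b p)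
        + y ⊗ₜ[K] (cc a b p ⊗ₜ[K] ⁅x, dd a b p⁆))]
  refine Finset.sum_congr rfl fun p _ => ?_
  have hx : ∀ u : L, ⁅x, u⁆ = -⁅u, x⁆ := fun u => (lie_skew x u).symm
  rcases p with i | i <;>
    simp only [Equiv.sumComm_apply, Sum.swap_inl, Sum.swap_inr, cc_inl, cc_inr, dd_inl, dd_inr,
      hx, neg_tmul, tmul_neg, neg_neg, lie_neg, neg_lie] <;>
    abel

lemma auxA2' (a b : ι → L) (x y : L) :
    ∑ p : ι ⊕ ι, orb3 K L ⁅x, cc a b p⁆ (dd a b p) y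
      = - ∑ p : ι ⊕ ι, orb3 K L y ⁅cc a b p, x⁆ (dd a b p) := by
  simp only [orb3]
  rw [← Finset.sum_neg_distrib]
  refine Finset.sum_congr rfl fun p _ => ?_
  have hx : ∀ u : L, ⁅x, u⁆ = -⁅u, x⁆ := fun u => (lie_skew x u).symm
  simp only [hx, neg_tmul, tmul_neg, neg_add]
  abel

end aux4

section aux5
variable {K : Type*} [Field K] [CharZero K]
variable {L : Type*} [LieRing L] [LieAlgebra K L]
variable {ι : Type*} [Fintype ι]

lemma keyAxy (a b : ι → L) (t : L ⊗[K] L)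
    (ht : t = ∑ i, (a i ⊗ₜ[K] b i - b i ⊗ₜ[K] a i)) (x y : L) :
    Pmap K L (∑ p : ι ⊕ ι, asrv K L (dd a b p) ⁅cc a b p, x ⊗ₜ[K] y⁆)
      - Pmap K L (Dmap K L (adT K L t) (x ⊗ₜ[K] y))
    = ((∑ p : ι ⊕ ι, orb3 K L ⁅cc a b p, x⁆ y (dd a b p))
        + ∑ p : ι ⊕ ι, orb3 K L x ⁅cc a b p, y⁆ (dd a b p))
      - ((∑ p : ι ⊕ ι, orb3 K L ⁅x, cc a b p⁆ (dd a b p) y)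
        + ∑ p : ι ⊕ ι, orb3 K L (cc a b p) ⁅x, dd a b p⁆ y) := by
  have h1 : Pmap K L (∑ p : ι ⊕ ι, asrv K L (dd a b p) ⁅cc a b p, x ⊗ₜ[K] y⁆)
      = (∑ p : ι ⊕ ι, orb3 K L ⁅cc a b p, x⁆ y (dd a b p))
        + ∑ p : ι ⊕ ι, orb3 K L x ⁅cc a b p, y⁆ (dd a b p) := by
    rw [map_sum, ← Finset.sum_add_distrib]
    refine Finset.sum_congr rfl fun p _ => ?_
    rw [TensorProduct.LieModule.lie_tmul_right, map_add, asrv_tmul, asrv_tmul, Pmap_apply]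
    simp only [map_add, cyc_tmul, orb3]
    abel
  have h2 : Pmap K L (Dmap K L (adT K L t) (x ⊗ₜ[K] y))
      = (∑ p : ι ⊕ ι, orb3 K L ⁅x, cc a b p⁆ (dd a b p) y)
        + ∑ p : ι ⊕ ι, orb3 K L (cc a b p) ⁅x, dd a b p⁆ y := by
    rw [Dmap_tmul, adT_apply, hlie_t a b t ht x, map_sum, map_sum, ← Finset.sum_add_distrib]
    refine Finset.sum_congr rfl fun p _ => ?_
    rw [map_add, asrv_tmul, asrv_tmul, Pmap_apply]
    simp only [map_add, cyc_tmul, orb3]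
    abel
  rw [h1, h2]

lemma keyAsym (a b : ι → L) (x y : L) :
    (((∑ p : ι ⊕ ι, orb3 K L ⁅cc a b p, y⁆ x (dd a b p))
        + ∑ p : ι ⊕ ι, orb3 K L y ⁅cc a b p, x⁆ (dd a b p))
      - ((∑ p : ι ⊕ ι, orb3 K L ⁅y, cc a b p⁆ (dd a b p) x)
        + ∑ p : ι ⊕ ι, orb3 K L (cc a b p) ⁅y, dd a b p⁆ x))
    = (((∑ p : ι ⊕ ι, orb3 K L ⁅cc a b p, x⁆ y (dd a b p))
        + ∑ p : ι ⊕ ι, orb3 K L x ⁅cc a b p, y⁆ (dd a b p))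
      - ((∑ p : ι ⊕ ι, orb3 K L ⁅x, cc a b p⁆ (dd a b p) y)
        + ∑ p : ι ⊕ ι, orb3 K L (cc a b p) ⁅x, dd a b p⁆ y)) := by
  rw [auxA1' a b x y, auxA1' a b y x, auxA2' a b x y, auxA2' a b y x]
  abel

lemma keyA (a b : ι → L) (t : L ⊗[K] L)
    (ht : t = ∑ i, (a i ⊗ₜ[K] b i - b i ⊗ₜ[K] a i))
    (u : L ⊗[K] L) (hu : TensorProduct.comm K L L u = -u) :
    Pmap K L (∑ p : ι ⊕ ι, asrv K L (dd a b p) ⁅cc a b p, u⁆)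
      = Pmap K L (Dmap K L (adT K L t) u) := by
  let G : L ⊗[K] L →ₗ[K] L ⊗[K] (L ⊗[K] L) :=
    Pmap K L ∘ₗ ((∑ p : ι ⊕ ι, asrv K L (dd a b p) ∘ₗ
      (LieModule.toEnd K L (L ⊗[K] L) (cc a b p))) - Dmap K L (adT K L t))
  have happ : ∀ v, G v = Pmap K L (∑ p : ι ⊕ ι, asrv K L (dd a b p) ⁅cc a b p, v⁆)
      - Pmap K L (Dmap K L (adT K L t) v) := by
    intro v
    simp only [G, LinearMap.coe_comp, Function.comp_apply, LinearMap.sub_apply,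
      LinearMap.sum_apply, LieModule.toEnd_apply_apply, map_sub]
  have h0 : G u = 0 := by
    apply skew_apply_eq_zero G _ u hu
    intro x' y'
    rw [happ, happ, keyAxy a b t ht, keyAxy a b t ht]
    exact keyAsym a b x' y'
  rw [happ] at h0
  exact sub_eq_zero.mp h0

end aux5

section aux6
variable {K : Type*} [Field K] [CharZero K]
variable {L : Type*} [LieRing L] [LieAlgebra K L]
variable {ι : Type*} [Fintype ι]

variable (a b : ι → L)

lemma hQexp (t : L ⊗[K] L) (ht : t = ∑ i, (a i ⊗ₜ[K] b i - b i ⊗ₜ[K] a i)) (z : L) :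
    Dmap K L (adT K L t) ⁅z, t⁆ = ∑ p : ι ⊕ ι, ∑ q : ι ⊕ ι,
      (⁅⁅z, cc a b p⁆, cc a b q⁆ ⊗ₜ[K] (dd a b q ⊗ₜ[K] dd a b p)
       + cc a b q ⊗ₜ[K] (⁅⁅z, cc a b p⁆, dd a b q⁆ ⊗ₜ[K] dd a b p)
       + ⁅cc a b p, cc a b q⁆ ⊗ₜ[K] (dd a b q ⊗ₜ[K] ⁅z, dd a b p⁆)
       + cc a b q ⊗ₜ[K] (⁅cc a b p, dd a b q⁆ ⊗ₜ[K] ⁅z, dd a b p⁆)) := by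
  rw [hlie_t a b t ht z, map_sum]
  refine Finset.sum_congr rfl fun p _ => ?_
  rw [map_add, Dmap_tmul, Dmap_tmul, adT_apply, adT_apply,
    hlie_t a b t ht ⁅z, cc a b p⁆, hlie_t a b t ht (cc a b p), map_sum, map_sum,
    ← Finset.sum_add_distrib]
  refine Finset.sum_congr rfl fun q _ => ?_
  rw [map_add, map_add, asrv_tmul, asrv_tmul, asrv_tmul, asrv_tmul]
  abel

lemma hPQexp (t : L ⊗[K] L) (ht : t = ∑ i, (a i ⊗ₜ[K] b i - b i ⊗ₜ[K] a i)) (z : L) :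
    Pmap K L (Dmap K L (adT K L t) ⁅z, t⁆) =
      (∑ p : ι ⊕ ι, ∑ q : ι ⊕ ι, ⁅⁅z, cc a b p⁆, cc a b q⁆ ⊗ₜ[K] (dd a b q ⊗ₜ[K] dd a b p))
    + (∑ p : ι ⊕ ι, ∑ q : ι ⊕ ι, dd a b q ⊗ₜ[K] (dd a b p ⊗ₜ[K] ⁅⁅z, cc a b p⁆, cc a b q⁆))
    + (∑ p : ι ⊕ ι, ∑ q : ι ⊕ ι, dd a b p ⊗ₜ[K] (⁅⁅z, cc a b p⁆, cc a b q⁆ ⊗ₜ[K] dd a b q))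
    + (∑ p : ι ⊕ ι, ∑ q : ι ⊕ ι, cc a b q ⊗ₜ[K] (⁅⁅z, cc a b p⁆, dd a b q⁆ ⊗ₜ[K] dd a b p))
    + (∑ p : ι ⊕ ι, ∑ q : ι ⊕ ι, ⁅⁅z, cc a b p⁆, dd a b q⁆ ⊗ₜ[K] (dd a b p ⊗ₜ[K] cc a b q))
    + (∑ p : ι ⊕ ι, ∑ q : ι ⊕ ι, dd a b p ⊗ₜ[K] (cc a b q ⊗ₜ[K] ⁅⁅z, cc a b p⁆, dd a b q⁆))
    + (∑ p : ι ⊕ ι, ∑ q : ι ⊕ ι, ⁅cc a b p, cc a b q⁆ ⊗ₜ[K] (dd a b q ⊗ₜ[K] ⁅z, dd a b p⁆))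
    + (∑ p : ι ⊕ ι, ∑ q : ι ⊕ ι, dd a b q ⊗ₜ[K] (⁅z, dd a b p⁆ ⊗ₜ[K] ⁅cc a b p, cc a b q⁆))
    + (∑ p : ι ⊕ ι, ∑ q : ι ⊕ ι, ⁅z, dd a b p⁆ ⊗ₜ[K] (⁅cc a b p, cc a b q⁆ ⊗ₜ[K] dd a b q))
    + (∑ p : ι ⊕ ι, ∑ q : ι ⊕ ι, cc a b q ⊗ₜ[K] (⁅cc a b p, dd a b q⁆ ⊗ₜ[K] ⁅z, dd a b p⁆))
    + (∑ p : ι ⊕ ι, ∑ q : ι ⊕ ι, ⁅cc a b p, dd a b q⁆ ⊗ₜ[K] (⁅z, dd a b p⁆ ⊗ₜ[K] cc a b q))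
    + (∑ p : ι ⊕ ι, ∑ q : ι ⊕ ι, ⁅z, dd a b p⁆ ⊗ₜ[K] (cc a b q ⊗ₜ[K] ⁅cc a b p, dd a b q⁆)) := by
  rw [hQexp a b t ht z]
  simp only [map_sum, map_add, Pmap_apply, cyc_tmul, Finset.sum_add_distrib]
  abel

lemma hZexp (z : L) :
    ⁅z, cyb K L (cc a b) (dd a b)⁆ =
      (∑ p : ι ⊕ ι, ∑ q : ι ⊕ ι, ⁅z, ⁅cc a b p, cc a b q⁆⁆ ⊗ₜ[K] (dd a b p ⊗ₜ[K] dd a b q))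
    + (∑ p : ι ⊕ ι, ∑ q : ι ⊕ ι, ⁅cc a b p, cc a b q⁆ ⊗ₜ[K] (⁅z, dd a b p⁆ ⊗ₜ[K] dd a b q))
    + (∑ p : ι ⊕ ι, ∑ q : ι ⊕ ι, ⁅cc a b p, cc a b q⁆ ⊗ₜ[K] (dd a b p ⊗ₜ[K] ⁅z, dd a b q⁆))
    + (∑ p : ι ⊕ ι, ∑ q : ι ⊕ ι, ⁅z, cc a b p⁆ ⊗ₜ[K] (⁅dd a b p, cc a b q⁆ ⊗ₜ[K] dd a b q))
    + (∑ p : ι ⊕ ι, ∑ q : ι ⊕ ι, cc a b p ⊗ₜ[K] (⁅z, ⁅dd a b p, cc a b q⁆⁆ ⊗ₜ[K] dd a b q))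
    + (∑ p : ι ⊕ ι, ∑ q : ι ⊕ ι, cc a b p ⊗ₜ[K] (⁅dd a b p, cc a b q⁆ ⊗ₜ[K] ⁅z, dd a b q⁆))
    + (∑ p : ι ⊕ ι, ∑ q : ι ⊕ ι, ⁅z, cc a b p⁆ ⊗ₜ[K] (cc a b q ⊗ₜ[K] ⁅dd a b p, dd a b q⁆))
    + (∑ p : ι ⊕ ι, ∑ q : ι ⊕ ι, cc a b p ⊗ₜ[K] (⁅z, cc a b q⁆ ⊗ₜ[K] ⁅dd a b p, dd a b q⁆))
    + (∑ p : ι ⊕ ι, ∑ q : ι ⊕ ι, cc a b p ⊗ₜ[K] (cc a b q ⊗ₜ[K] ⁅z, ⁅dd a b p, dd a b q⁆⁆)) := by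
  simp only [cyb, lie_sum', lie_add, TensorProduct.LieModule.lie_tmul_right, tmul_add, add_tmul,
    Finset.sum_add_distrib]
  abel

end aux6

section aux7
section
variable {K : Type*} [Field K] [CharZero K]
variable {L : Type*} [LieRing L] [LieAlgebra K L]
variable {ι : Type*} [Fintype ι]
variable (a b : ι → L) (z : L)

lemma pair1 :
    (∑ p : ι ⊕ ι, ∑ q : ι ⊕ ι, ⁅cc a b p, ⁅z, cc a b q⁆⁆ ⊗ₜ[K] (dd a b p ⊗ₜ[K] dd a b q))
    = -(∑ p : ι ⊕ ι, ∑ q : ι ⊕ ι, ⁅⁅z, cc a b p⁆, cc a b q⁆ ⊗ₜ[K] (dd a b q ⊗ₜ[K] dd a b p)) := by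
  rw [Finset.sum_comm]
  simp only [← Finset.sum_neg_distrib]
  refine Finset.sum_congr rfl fun p _ => ?_
  refine Finset.sum_congr rfl fun q _ => ?_
  rw [show ⁅cc a b q, ⁅z, cc a b p⁆⁆ = -⁅⁅z, cc a b p⁆, cc a b q⁆ from (lie_skew _ _).symm, neg_tmul]

lemma pair2 :
    (∑ p : ι ⊕ ι, ∑ q : ι ⊕ ι, ⁅⁅z, cc a b p⁆, cc a b q⁆ ⊗ₜ[K] (dd a b p ⊗ₜ[K] dd a b q))
    = -(∑ p : ι ⊕ ι, ∑ q : ι ⊕ ι, ⁅⁅z, cc a b p⁆, dd a b q⁆ ⊗ₜ[K] (dd a b p ⊗ₜ[K] cc a b q)) := by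
  simp only [← Finset.sum_neg_distrib]
  refine Finset.sum_congr rfl fun p _ => ?_
  conv_rhs => rw [← Equiv.sum_comp (Equiv.sumComm ι ι)]
  refine Finset.sum_congr rfl fun q _ => ?_
  rcases q with j | j <;>
    simp only [Equiv.sumComm_apply, Sum.swap_inl, Sum.swap_inr, cc_inl, cc_inr, dd_inl, dd_inr, lie_neg, neg_lie, neg_tmul, tmul_neg, neg_neg]

lemma pair3 :
    (∑ p : ι ⊕ ι, ∑ q : ι ⊕ ι, ⁅cc a b p, cc a b q⁆ ⊗ₜ[K] (dd a b p ⊗ₜ[K] ⁅z, dd a b q⁆))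
    = -(∑ p : ι ⊕ ι, ∑ q : ι ⊕ ι, ⁅cc a b p, cc a b q⁆ ⊗ₜ[K] (dd a b q ⊗ₜ[K] ⁅z, dd a b p⁆)) := by
  rw [Finset.sum_comm]
  simp only [← Finset.sum_neg_distrib]
  refine Finset.sum_congr rfl fun p _ => ?_
  refine Finset.sum_congr rfl fun q _ => ?_
  rw [show ⁅cc a b q, cc a b p⁆ = -⁅cc a b p, cc a b q⁆ from (lie_skew _ _).symm, neg_tmul]

lemma pair4 :
    (∑ p : ι ⊕ ι, ∑ q : ι ⊕ ι, ⁅cc a b p, cc a b q⁆ ⊗ₜ[K] (⁅z, dd a b p⁆ ⊗ₜ[K] dd a b q))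
    = -(∑ p : ι ⊕ ι, ∑ q : ι ⊕ ι, ⁅cc a b p, dd a b q⁆ ⊗ₜ[K] (⁅z, dd a b p⁆ ⊗ₜ[K] cc a b q)) := by
  simp only [← Finset.sum_neg_distrib]
  refine Finset.sum_congr rfl fun p _ => ?_
  conv_rhs => rw [← Equiv.sum_comp (Equiv.sumComm ι ι)]
  refine Finset.sum_congr rfl fun q _ => ?_
  rcases q with j | j <;>
    simp only [Equiv.sumComm_apply, Sum.swap_inl, Sum.swap_inr, cc_inl, cc_inr, dd_inl, dd_inr, lie_neg, neg_lie, neg_tmul, tmul_neg, neg_neg]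

lemma pair5 :
    (∑ p : ι ⊕ ι, ∑ q : ι ⊕ ι, ⁅z, cc a b p⁆ ⊗ₜ[K] (⁅dd a b p, cc a b q⁆ ⊗ₜ[K] dd a b q))
    = -(∑ p : ι ⊕ ι, ∑ q : ι ⊕ ι, ⁅z, dd a b p⁆ ⊗ₜ[K] (⁅cc a b p, cc a b q⁆ ⊗ₜ[K] dd a b q)) := by
  simp only [← Finset.sum_neg_distrib]
  conv_rhs => rw [← Equiv.sum_comp (Equiv.sumComm ι ι)]
  refine Finset.sum_congr rfl fun p _ => ?_
  refine Finset.sum_congr rfl fun q _ => ?_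
  rcases p with i | i <;>
    simp only [Equiv.sumComm_apply, Sum.swap_inl, Sum.swap_inr, cc_inl, cc_inr, dd_inl, dd_inr, lie_neg, neg_lie, neg_tmul, tmul_neg, neg_neg]

lemma pair6 :
    (∑ p : ι ⊕ ι, ∑ q : ι ⊕ ι, cc a b p ⊗ₜ[K] (⁅dd a b p, ⁅z, cc a b q⁆⁆ ⊗ₜ[K] dd a b q))
    = -(∑ p : ι ⊕ ι, ∑ q : ι ⊕ ι, cc a b q ⊗ₜ[K] (⁅⁅z, cc a b p⁆, dd a b q⁆ ⊗ₜ[K] dd a b p)) := by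
  rw [Finset.sum_comm]
  simp only [← Finset.sum_neg_distrib]
  refine Finset.sum_congr rfl fun p _ => ?_
  refine Finset.sum_congr rfl fun q _ => ?_
  rw [show ⁅dd a b q, ⁅z, cc a b p⁆⁆ = -⁅⁅z, cc a b p⁆, dd a b q⁆ from (lie_skew _ _).symm, neg_tmul, tmul_neg]

lemma pair7 :
    (∑ p : ι ⊕ ι, ∑ q : ι ⊕ ι, cc a b p ⊗ₜ[K] (⁅⁅z, dd a b p⁆, cc a b q⁆ ⊗ₜ[K] dd a b q))
    = -(∑ p : ι ⊕ ι, ∑ q : ι ⊕ ι, dd a b p ⊗ₜ[K] (⁅⁅z, cc a b p⁆, cc a b q⁆ ⊗ₜ[K] dd a b q)) := by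
  simp only [← Finset.sum_neg_distrib]
  conv_rhs => rw [← Equiv.sum_comp (Equiv.sumComm ι ι)]
  refine Finset.sum_congr rfl fun p _ => ?_
  refine Finset.sum_congr rfl fun q _ => ?_
  rcases p with i | i <;>
    simp only [Equiv.sumComm_apply, Sum.swap_inl, Sum.swap_inr, cc_inl, cc_inr, dd_inl, dd_inr, lie_neg, neg_lie, neg_tmul, tmul_neg, neg_neg]

lemma pair8 :
    (∑ p : ι ⊕ ι, ∑ q : ι ⊕ ι, cc a b p ⊗ₜ[K] (⁅dd a b p, cc a b q⁆ ⊗ₜ[K] ⁅z, dd a b q⁆))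
    = -(∑ p : ι ⊕ ι, ∑ q : ι ⊕ ι, cc a b q ⊗ₜ[K] (⁅cc a b p, dd a b q⁆ ⊗ₜ[K] ⁅z, dd a b p⁆)) := by
  rw [Finset.sum_comm]
  simp only [← Finset.sum_neg_distrib]
  refine Finset.sum_congr rfl fun p _ => ?_
  refine Finset.sum_congr rfl fun q _ => ?_
  rw [show ⁅dd a b q, cc a b p⁆ = -⁅cc a b p, dd a b q⁆ from (lie_skew _ _).symm, neg_tmul, tmul_neg]

lemma pair9 :
    (∑ p : ι ⊕ ι, ∑ q : ι ⊕ ι, cc a b p ⊗ₜ[K] (cc a b q ⊗ₜ[K] ⁅⁅z, dd a b p⁆, dd a b q⁆))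
    = -(∑ p : ι ⊕ ι, ∑ q : ι ⊕ ι, dd a b p ⊗ₜ[K] (cc a b q ⊗ₜ[K] ⁅⁅z, cc a b p⁆, dd a b q⁆)) := by
  simp only [← Finset.sum_neg_distrib]
  conv_rhs => rw [← Equiv.sum_comp (Equiv.sumComm ι ι)]
  refine Finset.sum_congr rfl fun p _ => ?_
  refine Finset.sum_congr rfl fun q _ => ?_
  rcases p with i | i <;>
    simp only [Equiv.sumComm_apply, Sum.swap_inl, Sum.swap_inr, cc_inl, cc_inr, dd_inl, dd_inr, lie_neg, neg_lie, neg_tmul, tmul_neg, neg_neg]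

lemma pair10 :
    (∑ p : ι ⊕ ι, ∑ q : ι ⊕ ι, cc a b p ⊗ₜ[K] (cc a b q ⊗ₜ[K] ⁅dd a b p, ⁅z, dd a b q⁆⁆))
    = -(∑ p : ι ⊕ ι, ∑ q : ι ⊕ ι, dd a b q ⊗ₜ[K] (dd a b p ⊗ₜ[K] ⁅⁅z, cc a b p⁆, cc a b q⁆)) := by
  have hzflip : ∀ u v : L, ⁅u, ⁅z, v⁆⁆ = -⁅⁅z, v⁆, u⁆ := fun u v => (lie_skew _ _).symm
  rw [Finset.sum_comm]
  simp only [← Finset.sum_neg_distrib]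
  conv_rhs => rw [← Equiv.sum_comp (Equiv.sumComm ι ι)]
  refine Finset.sum_congr rfl fun p _ => ?_
  conv_rhs => rw [← Equiv.sum_comp (Equiv.sumComm ι ι)]
  refine Finset.sum_congr rfl fun q _ => ?_
  rcases p with i | i <;> rcases q with j | j <;>
    simp only [Equiv.sumComm_apply, Sum.swap_inl, Sum.swap_inr, cc_inl, cc_inr, dd_inl, dd_inr, lie_neg, neg_lie, neg_tmul, tmul_neg, neg_neg, hzflip]

lemma pair11 :
    (∑ p : ι ⊕ ι, ∑ q : ι ⊕ ι, ⁅z, cc a b p⁆ ⊗ₜ[K] (cc a b q ⊗ₜ[K] ⁅dd a b p, dd a b q⁆))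
    = -(∑ p : ι ⊕ ι, ∑ q : ι ⊕ ι, ⁅z, dd a b p⁆ ⊗ₜ[K] (cc a b q ⊗ₜ[K] ⁅cc a b p, dd a b q⁆)) := by
  simp only [← Finset.sum_neg_distrib]
  conv_rhs => rw [← Equiv.sum_comp (Equiv.sumComm ι ι)]
  refine Finset.sum_congr rfl fun p _ => ?_
  refine Finset.sum_congr rfl fun q _ => ?_
  rcases p with i | i <;>
    simp only [Equiv.sumComm_apply, Sum.swap_inl, Sum.swap_inr, cc_inl, cc_inr, dd_inl, dd_inr, lie_neg, neg_lie, neg_tmul, tmul_neg, neg_neg]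

lemma pair12 :
    (∑ p : ι ⊕ ι, ∑ q : ι ⊕ ι, cc a b p ⊗ₜ[K] (⁅z, cc a b q⁆ ⊗ₜ[K] ⁅dd a b p, dd a b q⁆))
    = -(∑ p : ι ⊕ ι, ∑ q : ι ⊕ ι, dd a b q ⊗ₜ[K] (⁅z, dd a b p⁆ ⊗ₜ[K] ⁅cc a b p, cc a b q⁆)) := by
  rw [Finset.sum_comm]
  simp only [← Finset.sum_neg_distrib]
  conv_rhs => rw [← Equiv.sum_comp (Equiv.sumComm ι ι)]
  refine Finset.sum_congr rfl fun p _ => ?_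
  conv_rhs => rw [← Equiv.sum_comp (Equiv.sumComm ι ι)]
  refine Finset.sum_congr rfl fun q _ => ?_
  rcases p with i | i <;> rcases q with j | j
  · simp only [Equiv.sumComm_apply, Sum.swap_inl, Sum.swap_inr, cc_inl, cc_inr, dd_inl, dd_inr, lie_neg, neg_lie, neg_tmul, tmul_neg, neg_neg]
    rw [show ⁅b j, b i⁆ = -⁅b i, b j⁆ from (lie_skew _ _).symm]
    simp only [neg_tmul, tmul_neg, neg_neg]
  · simp only [Equiv.sumComm_apply, Sum.swap_inl, Sum.swap_inr, cc_inl, cc_inr, dd_inl, dd_inr, lie_neg, neg_lie, neg_tmul, tmul_neg, neg_neg]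
    rw [show ⁅a j, b i⁆ = -⁅b i, a j⁆ from (lie_skew _ _).symm]
    simp only [neg_tmul, tmul_neg, neg_neg]
  · simp only [Equiv.sumComm_apply, Sum.swap_inl, Sum.swap_inr, cc_inl, cc_inr, dd_inl, dd_inr, lie_neg, neg_lie, neg_tmul, tmul_neg, neg_neg]
    rw [show ⁅b j, a i⁆ = -⁅a i, b j⁆ from (lie_skew _ _).symm]
    simp only [neg_tmul, tmul_neg, neg_neg]
  · simp only [Equiv.sumComm_apply, Sum.swap_inl, Sum.swap_inr, cc_inl, cc_inr, dd_inl, dd_inr, lie_neg, neg_lie, neg_tmul, tmul_neg, neg_neg]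
    rw [show ⁅a j, a i⁆ = -⁅a i, a j⁆ from (lie_skew _ _).symm]
    simp only [neg_tmul, tmul_neg, neg_neg]

end
end aux7


section aux8
variable {K : Type*} [Field K] [CharZero K]
variable {L : Type*} [LieRing L] [LieAlgebra K L]
variable {ι : Type*} [Fintype ι]
variable (a b : ι → L) (z : L)

lemma hZ1s :
    (∑ p : ι ⊕ ι, ∑ q : ι ⊕ ι, ⁅z, ⁅cc a b p, cc a b q⁆⁆ ⊗ₜ[K] (dd a b p ⊗ₜ[K] dd a b q))
    = (∑ p : ι ⊕ ι, ∑ q : ι ⊕ ι, ⁅⁅z, cc a b p⁆, cc a b q⁆ ⊗ₜ[K] (dd a b p ⊗ₜ[K] dd a b q))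
    + (∑ p : ι ⊕ ι, ∑ q : ι ⊕ ι, ⁅cc a b p, ⁅z, cc a b q⁆⁆ ⊗ₜ[K] (dd a b p ⊗ₜ[K] dd a b q)) := by
  rw [← Finset.sum_add_distrib]
  refine Finset.sum_congr rfl fun p _ => ?_
  rw [← Finset.sum_add_distrib]
  refine Finset.sum_congr rfl fun q _ => ?_
  rw [leibniz_lie, add_tmul]

lemma hZ5s :
    (∑ p : ι ⊕ ι, ∑ q : ι ⊕ ι, cc a b p ⊗ₜ[K] (⁅z, ⁅dd a b p, cc a b q⁆⁆ ⊗ₜ[K] dd a b q))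
    = (∑ p : ι ⊕ ι, ∑ q : ι ⊕ ι, cc a b p ⊗ₜ[K] (⁅⁅z, dd a b p⁆, cc a b q⁆ ⊗ₜ[K] dd a b q))
    + (∑ p : ι ⊕ ι, ∑ q : ι ⊕ ι, cc a b p ⊗ₜ[K] (⁅dd a b p, ⁅z, cc a b q⁆⁆ ⊗ₜ[K] dd a b q)) := by
  rw [← Finset.sum_add_distrib]
  refine Finset.sum_congr rfl fun p _ => ?_
  rw [← Finset.sum_add_distrib]
  refine Finset.sum_congr rfl fun q _ => ?_
  rw [leibniz_lie, add_tmul, tmul_add]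

lemma hZ9s :
    (∑ p : ι ⊕ ι, ∑ q : ι ⊕ ι, cc a b p ⊗ₜ[K] (cc a b q ⊗ₜ[K] ⁅z, ⁅dd a b p, dd a b q⁆⁆))
    = (∑ p : ι ⊕ ι, ∑ q : ι ⊕ ι, cc a b p ⊗ₜ[K] (cc a b q ⊗ₜ[K] ⁅⁅z, dd a b p⁆, dd a b q⁆))
    + (∑ p : ι ⊕ ι, ∑ q : ι ⊕ ι, cc a b p ⊗ₜ[K] (cc a b q ⊗ₜ[K] ⁅dd a b p, ⁅z, dd a b q⁆⁆)) := by
  rw [← Finset.sum_add_distrib]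
  refine Finset.sum_congr rfl fun p _ => ?_
  rw [← Finset.sum_add_distrib]
  refine Finset.sum_congr rfl fun q _ => ?_
  rw [leibniz_lie, tmul_add, tmul_add]

lemma keyB (t : L ⊗[K] L) (ht : t = ∑ i, (a i ⊗ₜ[K] b i - b i ⊗ₜ[K] a i)) :
    Pmap K L (Dmap K L (adT K L t) ⁅z, t⁆) = -⁅z, cyb K L (cc a b) (dd a b)⁆ := by
  rw [hPQexp a b t ht z, hZexp a b z, hZ1s, hZ5s, hZ9s,
    pair1, pair2, pair3, pair4, pair5, pair6, pair7, pair8, pair9, pair10, pair11, pair12]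
  abel

lemma Dmap_sub (φ ψ : L →ₗ[K] L ⊗[K] L) (u : L ⊗[K] L) :
    Dmap K L (φ - ψ) u = Dmap K L φ u - Dmap K L ψ u := by
  have h : Dmap K L (φ - ψ) = Dmap K L φ - Dmap K L ψ := by
    apply TensorProduct.ext'
    intro x y
    simp only [Dmap_tmul, LinearMap.sub_apply, map_sub]
  rw [h, LinearMap.sub_apply]

lemma kalt (t : L ⊗[K] L) (ht : t = ∑ i, (a i ⊗ₜ[K] b i - b i ⊗ₜ[K] a i))
    (δ : L →ₗ[K] L ⊗[K] L) (hskew : skewCobracket K L δ) :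
    Alt3 K L (Dmap K L δ t) = (2 : K) • Pmap K L (Dmap K L δ t) := by
  rw [hDt a b t ht δ, map_sum, map_sum, Finset.smul_sum]
  exact Finset.sum_congr rfl fun p _ => dagger (δ (cc a b p)) (hskew (cc a b p)) (dd a b p)

end aux8

theorem stmt2 {K : Type*} [Field K] [CharZero K]
    {L : Type*} [LieRing L] [LieAlgebra K L] [Module.Finite K L]
    -- (g, δ) is a Lie bialgebra
    (δ : L →ₗ[K] L ⊗[K] L)
    (hskew : skewCobracket K L δ) (hcoc : cocycle K L δ) (hcoj : coJacobi K L δ)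
    -- t ∈ ∧²g, written t = Σᵢ aᵢ ∧ bᵢ = Σᵢ (aᵢ ⊗ bᵢ − bᵢ ⊗ aᵢ)
    (ι : Type*) [Fintype ι] (a b : ι → L) (t : L ⊗[K] L)
    (ht : t = ∑ i, (a i ⊗ₜ[K] b i - b i ⊗ₜ[K] a i))
    -- the twist condition δ(t) + (1/2)[t,t] = 0, written in g ⊗ g ⊗ g via the
    -- antisymmetrization embedding of ∧³g (so that [t,t]/2 is the CYB expression of t)
    (htw : Alt3 K L (Dmap K L δ t)
      + (2 : K) • cyb K L (Sum.elim a fun i => -(b i)) (Sum.elim b a) = 0) :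
    -- δ_t = δ + [t, ·] = δ − ad_•(t) is again a Lie bialgebra structure:
    skewCobracket K L (δ - adT K L t) ∧ cocycle K L (δ - adT K L t)
      ∧ coJacobi K L (δ - adT K L t) := by
  refine ⟨?_, ?_, ?_⟩
  · intro w
    have hct := hcommt a b t ht
    simp only [LinearMap.sub_apply, adT_apply, map_sub, comm_lie, hct, hskew w, lie_neg]
    abel
  · intro u v
    simp only [LinearMap.sub_apply, adT_apply]
    rw [hcoc u v, lie_lie]
    simp only [lie_sub]
    abel
  · intro w
    rw [← Pmap_apply]
    have e1 : (δ - adT K L t) w = δ w - ⁅w, t⁆ := by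
      simp only [LinearMap.sub_apply, adT_apply]
    rw [e1, Dmap_sub, map_sub, map_sub, keyM1 a b t ht δ hcoc w]
    have h0 : Pmap K L (Dmap K L δ (δ w)) = 0 := hcoj w
    have hPDt : Pmap K L (Dmap K L δ t) = - cyb K L (cc a b) (dd a b) := by
      have htw' : (2 : K) • Pmap K L (Dmap K L δ t)
          + (2 : K) • cyb K L (cc a b) (dd a b) = 0 := by
        rw [← kalt a b t ht δ hskew]
        exact htw
      rw [← smul_add] at htw'
      rcases smul_eq_zero.mp htw' with h | h
      · exact absurd h two_ne_zero
      · exact eq_neg_of_add_eq_zero_left h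
    simp only [map_sub, Pmap_lie, h0, hPDt, keyA a b t ht (δ w) (hskew w),
      keyB a b w t ht, lie_neg]
    abel
end

section
/- Let (g, δ) be a Lie bialgebra and u ⊂ g a strongly coisotropic Lie subalgebra, i.e. δ(u) ⊂ g ⊗ [u,u] + [u,u] ⊗ g. Let ρ : g → Der(A) be a Poisson action of (g, δ) on a Poisson algebra (A, {·,·}). Then for any Lie algebra characters ζ₁, ζ₂ of u (linear maps u → K vanishing on [u,u]), the Poisson bracket of weight spaces satisfies {A^{ζ₁}, A^{ζ₂}} ⊂ A^{ζ₁+ζ₂}, where A^ζ = {f ∈ A : ρ(x)(f) = ζ(x)f for all x ∈ u}. In particular the span of semi-invariants A^u = ⊕_ζ A^ζ is a graded Poisson subalgebra of A. -/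
/- STATEMENT 6: If u is a strongly coisotropic Lie subalgebra of a Lie bialgebra (g, δ)
(δ(u) ⊂ g ⊗ [u,u] + [u,u] ⊗ g) and ρ : g → Der(A) is a Poisson action on a Poisson
algebra (A, {·,·}), then for Lie algebra characters ζ₁, ζ₂ of u one has
{A^{ζ₁}, A^{ζ₂}} ⊂ A^{ζ₁+ζ₂}: the semi-invariants form a graded Poisson subalgebra. -/

open TensorProduct

section defs

variable (K : Type*) [Field K] [CharZero K]
variable (L : Type*) [LieRing L] [LieAlgebra K L]

/-- the image of `p ⊗ q` in `L ⊗ L`, for submodules `p q ⊆ L`. -/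
noncomputable def tpSub (p q : Submodule K L) : Submodule K (L ⊗[K] L) :=
  Submodule.map₂ (TensorProduct.mk K L L) p q

/-- the derived subalgebra `[u,u]` of a Lie subalgebra `u`, as a submodule of `L`. -/
def derived (u : LieSubalgebra K L) : Submodule K L :=
  Submodule.span K {z : L | ∃ a ∈ u, ∃ b ∈ u, z = ⁅a, b⁆}

variable (A : Type*) [CommRing A] [Algebra K A]

/-- the bilinear operator on `A` induced by an element of `g ⊗ g` and an action
`ρ : g → End(A)`:  `biop ρ (x ⊗ y) f g = ρ(x)(f) · ρ(y)(g)`. -/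
noncomputable def biop (ρ : L →ₗ[K] Module.End K A) :
    L ⊗[K] L →ₗ[K] A →ₗ[K] A →ₗ[K] A :=
  TensorProduct.lift
  { toFun := fun u =>
      { toFun := fun v => (LinearMap.mul K A).compl₁₂ (ρ u) (ρ v)
        map_add' := fun v w => by
          ext f g
          simp [LinearMap.compl₁₂_apply, map_add, mul_add]
        map_smul' := fun c v => by
          ext f g
          simp [LinearMap.compl₁₂_apply, mul_smul_comm] }
    map_add' := fun u u' => by
      ext v f g
      simp [LinearMap.compl₁₂_apply, map_add, add_mul]
    map_smul' := fun c u => by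
      ext v f g
      simp [LinearMap.compl₁₂_apply, smul_mul_assoc] }

end defs

theorem stmt6 {K : Type*} [Field K] [CharZero K]
    {L : Type*} [LieRing L] [LieAlgebra K L] [Module.Finite K L]
    {A : Type*} [CommRing A] [Algebra K A]
    -- a Lie bialgebra cobracket δ on g
    (δ : L →ₗ[K] L ⊗[K] L)
    (hskew : ∀ z : L, TensorProduct.comm K L L (δ z) = - δ z)
    (hcoc : ∀ z w : L, δ ⁅z, w⁆ = ⁅z, δ w⁆ - ⁅w, δ z⁆)
    -- u ⊆ g is a strongly coisotropic Lie subalgebra: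
    -- δ(u) ⊆ g ⊗ [u,u] + [u,u] ⊗ g
    (u : LieSubalgebra K L)
    (hu : ∀ z ∈ u, δ z ∈
      tpSub K L ⊤ (derived K L u) ⊔ tpSub K L (derived K L u) ⊤)
    -- (A, P) is a Poisson algebra
    (P : A →ₗ[K] A →ₗ[K] A)
    (hPanti : ∀ f g : A, P f g = - P g f)
    (hPleib : ∀ f g h : A, P f (g * h) = g * P f h + P f g * h)
    (hPjac : ∀ f g h : A, P f (P g h) = P (P f g) h + P g (P f h))
    -- ρ : g → Der(A) is a Poisson action of (g, δ) on (A, P)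
    (ρ : L →ₗ[K] Module.End K A)
    (hρder : ∀ (z : L) (f g : A), ρ z (f * g) = f * ρ z g + ρ z f * g)
    (hρlie : ∀ z w : L, ρ ⁅z, w⁆ = ρ z * ρ w - ρ w * ρ z)
    (hρpa : ∀ (z : L) (f g : A),
      biop K L A ρ (δ z) f g - biop K L A ρ (δ z) g f
        = ρ z (P f g) - P (ρ z f) g - P f (ρ z g))
    -- ζ₁, ζ₂ are Lie algebra characters of u (vanishing on [u,u])
    (ζ₁ ζ₂ : u →ₗ[K] K)
    (hζ₁ : ∀ a b : u, ζ₁ ⁅a, b⁆ = 0) (hζ₂ : ∀ a b : u, ζ₂ ⁅a, b⁆ = 0)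
    -- f is a weight vector of weight ζ₁ and g one of weight ζ₂
    (f g : A)
    (hf : ∀ z : u, ρ z f = ζ₁ z • f)
    (hg : ∀ z : u, ρ z g = ζ₂ z • g) :
    -- then {f,g} is a weight vector of weight ζ₁ + ζ₂
    ∀ z : u, ρ z (P f g) = (ζ₁ z + ζ₂ z) • P f g := by

  -- ρ kills weight vectors on the derived subalgebra
  have key : ∀ (a : A) (ζ : u →ₗ[K] K), (∀ z : u, ρ z a = ζ z • a) →
      ∀ w ∈ derived K L u, ρ w a = 0 := by
    intro a ζ ha w hw
    induction hw using Submodule.span_induction with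
    | mem x hx =>
      obtain ⟨p, hp, q, hq, rfl⟩ := hx
      have hpa : ρ p a = ζ ⟨p, hp⟩ • a := ha ⟨p, hp⟩
      have hqa : ρ q a = ζ ⟨q, hq⟩ • a := ha ⟨q, hq⟩
      rw [hρlie p q]
      simp only [LinearMap.sub_apply, Module.End.mul_apply, hpa, hqa, map_smul, smul_smul]
      rw [mul_comm, sub_self]
    | zero => simp
    | add x y hx hy ihx ihy => simp [map_add, ihx, ihy]
    | smul c x hx ih => simp [map_smul, ih]
  have kf : ∀ w ∈ derived K L u, ρ w f = 0 := key f ζ₁ hf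
  have kg : ∀ w ∈ derived K L u, ρ w g = 0 := key g ζ₂ hg
  intro z
  -- biop (δ z) vanishes on weight vectors
  have hbiop : ∀ a b : A, (∀ w ∈ derived K L u, ρ w a = 0) →
      (∀ w ∈ derived K L u, ρ w b = 0) → biop K L A ρ (δ (z : L)) a b = 0 := by
    intro a b ka kb
    obtain ⟨t₁, ht₁, t₂, ht₂, hsum⟩ := Submodule.mem_sup.mp (hu z z.2)
    set φ : L ⊗[K] L →ₗ[K] A :=
      (LinearMap.applyₗ b) ∘ₗ (LinearMap.applyₗ a) ∘ₗ (biop K L A ρ) with hφ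
    have hφ1 : tpSub K L ⊤ (derived K L u) ≤ LinearMap.ker φ := by
      rw [tpSub, Submodule.map₂_le]
      intro m _ n hn
      simp only [LinearMap.mem_ker, hφ, LinearMap.comp_apply, LinearMap.applyₗ_apply_apply,
        TensorProduct.mk_apply]
      simp [biop, LinearMap.compl₁₂_apply, kb n hn]
    have hφ2 : tpSub K L (derived K L u) ⊤ ≤ LinearMap.ker φ := by
      rw [tpSub, Submodule.map₂_le]
      intro m hm n _
      simp only [LinearMap.mem_ker, hφ, LinearMap.comp_apply, LinearMap.applyₗ_apply_apply,
        TensorProduct.mk_apply]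
      simp [biop, LinearMap.compl₁₂_apply, ka m hm]
    have : φ (δ (z : L)) = 0 := by
      rw [← hsum, map_add, hφ1 ht₁, hφ2 ht₂, add_zero]
    simpa [hφ, LinearMap.comp_apply, LinearMap.applyₗ_apply_apply] using this
  have hb1 : biop K L A ρ (δ (z : L)) f g = 0 := hbiop f g kf kg
  have hb2 : biop K L A ρ (δ (z : L)) g f = 0 := hbiop g f kg kf
  have h2 : ρ (z : L) (P f g) = P (ρ (z : L) f) g + P f (ρ (z : L) g) := by
    have h := hρpa (z : L) f g
    rw [hb1, hb2] at h
    linear_combination -h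
  rw [h2, hf z, hg z, map_smul, LinearMap.smul_apply, map_smul, add_smul]
end

section
/- Let r ∈ g ⊗ g be a quasitriangular r-matrix on a Lie algebra g and u ⊂ g a Lie subalgebra such that r ∈ u ⊗ u + g ⊗ [u,u] + [u,u] ⊗ g. Then u is a strongly coisotropic subalgebra of the Lie bialgebra (g, δ_r), i.e. δ_r(u) ⊂ g ⊗ [u,u] + [u,u] ⊗ g. -/
/- STATEMENT 7: If r is a quasitriangular r-matrix on g and u ⊆ g a Lie subalgebra with
r ∈ u ⊗ u + g ⊗ [u,u] + [u,u] ⊗ g, then u is strongly coisotropic for (g, δ_r):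
δ_r(u) ⊆ g ⊗ [u,u] + [u,u] ⊗ g. -/

open TensorProduct

theorem stmt7 {K : Type*} [Field K] [CharZero K]
    {L : Type*} [LieRing L] [LieAlgebra K L] [Module.Finite K L]
    (ι : Type*) [Fintype ι] (x y : ι → L) (r : L ⊗[K] L)
    -- r = Σᵢ xᵢ ⊗ yᵢ is a quasitriangular r-matrix:
    (hr : r = ∑ i, x i ⊗ₜ[K] y i)
    (hΩ : ∀ z : L, ⁅z, (2 : K)⁻¹ • (r + TensorProduct.comm K L L r)⁆ = 0)
    (hCYBE : ∑ i, ∑ j,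
        (⁅x i, x j⁆ ⊗ₜ[K] (y i ⊗ₜ[K] y j) + x i ⊗ₜ[K] (⁅y i, x j⁆ ⊗ₜ[K] y j)
          + x i ⊗ₜ[K] (x j ⊗ₜ[K] ⁅y i, y j⁆)) = (0 : L ⊗[K] (L ⊗[K] L)))
    -- u ⊆ g is a Lie subalgebra with r ∈ u ⊗ u + g ⊗ [u,u] + [u,u] ⊗ g
    (u : LieSubalgebra K L)
    (hru : r ∈ tpSub K L u.toSubmodule u.toSubmodule
      ⊔ tpSub K L ⊤ (derived K L u) ⊔ tpSub K L (derived K L u) ⊤) :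
    -- then u is strongly coisotropic: δ_r(u) ⊆ g ⊗ [u,u] + [u,u] ⊗ g
    ∀ z ∈ u, ⁅z, r⁆ ∈ tpSub K L ⊤ (derived K L u) ⊔ tpSub K L (derived K L u) ⊤ := by
  intro z hz
  set D := derived K L u with hD
  set W := tpSub K L ⊤ D ⊔ tpSub K L D ⊤ with hW
  -- bracketing with z preserves D
  have hgen : ∀ a ∈ u, ∀ b ∈ u, ⁅a, b⁆ ∈ D := fun a ha b hb =>
    Submodule.subset_span ⟨a, ha, b, hb, rfl⟩
  have hzD : ∀ w ∈ D, ⁅z, w⁆ ∈ D := by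
    intro w hw
    induction hw using Submodule.span_induction with
    | mem w hw =>
      obtain ⟨a, ha, b, hb, rfl⟩ := hw
      rw [leibniz_lie]
      exact D.add_mem (hgen _ (u.lie_mem hz ha) _ hb) (hgen _ ha _ (u.lie_mem hz hb))
    | zero => simpa using D.zero_mem
    | add w₁ w₂ _ _ h₁ h₂ => rw [lie_add]; exact D.add_mem h₁ h₂
    | smul c w _ h => rw [lie_smul]; exact D.smul_mem c h
  have key : ∀ a b : L, a ∈ (⊤ : Submodule K L) → b ∈ D → ⁅z, a ⊗ₜ[K] b⁆ ∈ W := by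
    intro a b _ hb
    rw [TensorProduct.LieModule.lie_tmul_right]
    refine W.add_mem ?_ ?_
    · exact le_sup_left (a := tpSub K L ⊤ D)
        (Submodule.apply_mem_map₂ _ Submodule.mem_top hb)
    · exact le_sup_left (a := tpSub K L ⊤ D)
        (Submodule.apply_mem_map₂ _ Submodule.mem_top (hzD b hb))
  have key' : ∀ a b : L, a ∈ D → b ∈ (⊤ : Submodule K L) → ⁅z, a ⊗ₜ[K] b⁆ ∈ W := by
    intro a b ha _
    rw [TensorProduct.LieModule.lie_tmul_right]
    refine W.add_mem ?_ ?_
    · exact le_sup_right (b := tpSub K L D ⊤)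
        (Submodule.apply_mem_map₂ _ (hzD a ha) Submodule.mem_top)
    · exact le_sup_right (b := tpSub K L D ⊤)
        (Submodule.apply_mem_map₂ _ ha Submodule.mem_top)
  have keyu : ∀ a b : L, a ∈ u → b ∈ u → ⁅z, a ⊗ₜ[K] b⁆ ∈ W := by
    intro a b ha hb
    rw [TensorProduct.LieModule.lie_tmul_right]
    refine W.add_mem ?_ ?_
    · exact le_sup_right (b := tpSub K L D ⊤)
        (Submodule.apply_mem_map₂ _ (hgen _ hz _ ha) Submodule.mem_top)
    · exact le_sup_left (a := tpSub K L ⊤ D)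
        (Submodule.apply_mem_map₂ _ Submodule.mem_top (hgen _ hz _ hb))
  -- the linear map w ↦ ⁅z, w⁆
  set φ : L ⊗[K] L →ₗ[K] L ⊗[K] L := LieModule.toEnd K L (L ⊗[K] L) z with hφ
  have hφw : (tpSub K L u.toSubmodule u.toSubmodule
      ⊔ tpSub K L ⊤ D ⊔ tpSub K L D ⊤) ≤ W.comap φ := by
    refine sup_le (sup_le ?_ ?_) ?_ <;>
      rw [tpSub, Submodule.map₂_le] <;> intro a ha b hb
    · exact keyu a b ha hb
    · exact key a b ha hb
    · exact key' a b ha hb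
  exact hφw hru
end

section
/- Let (H, R) be a quasitriangular Hopf algebra. Then the comultiplication Δ_H : H → (H ⊗ H)_{R₂₃} is a morphism of Hopf algebras, where (H ⊗ H)_{R₂₃} is the twist of H ⊗ H by the twisting element R₂₃; concretely, Δ_H is an algebra map and (R₂₃)⁻¹ · Δ_{H⊗H}(Δ_H(h)) · R₂₃ = (Δ_H ⊗ Δ_H)(Δ_H(h)) in (H⊗H)⊗(H⊗H) for all h ∈ H, after identifying via the flip of middle factors. -/
open TensorProduct

universe u

/-- A quasitriangular structure on a Hopf algebra `H`: an invertible element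
`R ∈ H ⊗ H` with `Δᵒᵖ = R Δ R⁻¹` and the hexagon identities
`(I ⊗ Δ)(R) = R₁₃R₁₂`, `(Δ ⊗ I)(R) = R₁₃R₂₃`. -/
structure QuasiTriangular (K H : Type u) [Field K] [Ring H] [HopfAlgebra K H] where
  R : H ⊗[K] H
  Rinv : H ⊗[K] H
  mul_inv : R * Rinv = 1
  inv_mul : Rinv * R = 1
  /-- `Δᵒᵖ(h) R = R Δ(h)`, i.e. `Δᵒᵖ = R Δ R⁻¹`. -/
  compat : ∀ h : H,
    (TensorProduct.comm K H H) (Coalgebra.comul (R := K) h) * R = R * Coalgebra.comul (R := K) h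
  /-- `(I ⊗ Δ)(R) = R₁₃ R₁₂` in `H ⊗ (H ⊗ H)`. -/
  hex1 : LinearMap.lTensor H (Coalgebra.comul (R := K) (A := H)) R
    = Algebra.TensorProduct.map (AlgHom.id K H) Algebra.TensorProduct.includeRight R
      * Algebra.TensorProduct.map (AlgHom.id K H) Algebra.TensorProduct.includeLeft R
  /-- `(Δ ⊗ I)(R) = R₁₃ R₂₃` in `H ⊗ (H ⊗ H)`. -/
  hex2 : Algebra.TensorProduct.assoc K K K H H H
      (LinearMap.rTensor H (Coalgebra.comul (R := K) (A := H)) R)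
    = Algebra.TensorProduct.map (AlgHom.id K H) Algebra.TensorProduct.includeRight R
      * (Algebra.TensorProduct.includeRight : (H ⊗[K] H) →ₐ[K] H ⊗[K] (H ⊗[K] H)) R

section Aux

set_option maxHeartbeats 1000000
set_option synthInstance.maxHeartbeats 400000

variable {K H : Type u} [Field K] [Ring H] [HopfAlgebra K H]

noncomputable local instance stmt11Ring4 : Ring (H ⊗[K] ((H ⊗[K] H) ⊗[K] H)) := inferInstance
noncomputable local instance stmt11Ring4' : Ring ((H ⊗[K] H) ⊗[K] (H ⊗[K] H)) := inferInstance

/-- The reassociation `(H⊗H)⊗(H⊗H) ≃ H⊗((H⊗H)⊗H)` as an algebra isomorphism. -/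
noncomputable def stmt11Phi (K H : Type u) [Field K] [Ring H] [HopfAlgebra K H] :
    (H ⊗[K] H) ⊗[K] (H ⊗[K] H) ≃ₐ[K] H ⊗[K] ((H ⊗[K] H) ⊗[K] H) :=
  ((Algebra.TensorProduct.assoc K K K (H ⊗[K] H) H H).symm.trans
    (Algebra.TensorProduct.congr (Algebra.TensorProduct.assoc K K K H H H) AlgEquiv.refl)).trans
    (Algebra.TensorProduct.assoc K K K H (H ⊗[K] H) H)

lemma stmt11Phi_tmul (a b c d : H) :
    stmt11Phi K H ((a ⊗ₜ[K] b) ⊗ₜ[K] (c ⊗ₜ[K] d)) = a ⊗ₜ[K] ((b ⊗ₜ[K] c) ⊗ₜ[K] d) := rfl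

lemma stmt11Phi_J (r : H ⊗[K] H) :
    stmt11Phi K H (Algebra.TensorProduct.map
      (Algebra.TensorProduct.includeRight : H →ₐ[K] H ⊗[K] H)
      (Algebra.TensorProduct.includeLeft : H →ₐ[K] H ⊗[K] H) r)
    = (1 : H) ⊗ₜ[K] (r ⊗ₜ[K] (1 : H)) := by
  induction r using TensorProduct.induction_on with
  | zero => rw [map_zero, map_zero, zero_tmul, tmul_zero]
  | add x y hx hy => rw [map_add, map_add, hx, hy]; simp [add_tmul, tmul_add]
  | tmul x y =>
      rw [Algebra.TensorProduct.map_tmul]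
      simp only [Algebra.TensorProduct.includeRight_apply, Algebra.TensorProduct.includeLeft_apply]
      exact stmt11Phi_tmul 1 x y 1

lemma stmt11Phi_ttt (t : (H ⊗[K] H) ⊗[K] (H ⊗[K] H)) :
    stmt11Phi K H (TensorProduct.tensorTensorTensorComm K H H H H t)
    = LinearMap.lTensor H (LinearMap.rTensor H (TensorProduct.comm K H H).toLinearMap)
        (stmt11Phi K H t) := by
  induction t using TensorProduct.induction_on with
  | zero => rw [map_zero, map_zero, map_zero]
  | add x y hx hy => simp only [map_add, hx, hy]
  | tmul p q =>
    induction p using TensorProduct.induction_on with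
    | zero => rw [zero_tmul, map_zero, map_zero, map_zero]
    | add x y hx hy => simp only [add_tmul, map_add, hx, hy]
    | tmul a b =>
      induction q using TensorProduct.induction_on with
      | zero => rw [tmul_zero, map_zero, map_zero, map_zero]
      | add x y hx hy => simp only [tmul_add, map_add, hx, hy]
      | tmul c d =>
        rw [tensorTensorTensorComm_tmul, stmt11Phi_tmul, stmt11Phi_tmul,
          LinearMap.lTensor_tmul, LinearMap.rTensor_tmul]
        simp

lemma stmt11Phi_last (u : (H ⊗[K] H) ⊗[K] H) :
    stmt11Phi K H (LinearMap.lTensor (H ⊗[K] H) (Coalgebra.comul (R := K) (A := H)) u)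
    = LinearMap.lTensor H (TensorProduct.assoc K H H H).symm.toLinearMap
        (LinearMap.lTensor H (LinearMap.lTensor H (Coalgebra.comul (R := K) (A := H)))
          ((TensorProduct.assoc K H H H) u)) := by
  induction u using TensorProduct.induction_on with
  | zero => rw [map_zero, map_zero, map_zero, map_zero, map_zero]
  | add x y hx hy => rw [map_add, map_add, map_add, map_add, map_add, hx, hy]
  | tmul p z =>
    induction p using TensorProduct.induction_on with
    | zero =>
        rw [zero_tmul, map_zero, map_zero, map_zero, map_zero, map_zero]
    | add x y hx hy =>
        rw [add_tmul, map_add, map_add, map_add, map_add, map_add, hx, hy]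
    | tmul x y =>
      rw [LinearMap.lTensor_tmul, TensorProduct.assoc_tmul, LinearMap.lTensor_tmul,
        LinearMap.lTensor_tmul, LinearMap.lTensor_tmul]
      generalize Coalgebra.comul (R := K) z = w
      induction w using TensorProduct.induction_on with
      | zero => rw [tmul_zero, tmul_zero, map_zero, map_zero, tmul_zero]
      | add s t hs ht =>
          simp only [tmul_add, map_add, hs, ht]
      | tmul s t =>
        rw [stmt11Phi_tmul]; simp

lemma stmt11L2 (h : H) :
    stmt11Phi K H (TensorProduct.map (Coalgebra.comul (R := K)) (Coalgebra.comul (R := K))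
        (Coalgebra.comul (R := K) h))
    = LinearMap.lTensor H (LinearMap.rTensor H (Coalgebra.comul (R := K)))
        (LinearMap.lTensor H (Coalgebra.comul (R := K)) (Coalgebra.comul (R := K) h)) := by
  have e1 : TensorProduct.map (Coalgebra.comul (R := K) (A := H)) (Coalgebra.comul (R := K))
      (Coalgebra.comul (R := K) h)
      = LinearMap.lTensor (H ⊗[K] H) (Coalgebra.comul (R := K))
        ((Coalgebra.comul (R := K) (A := H)).rTensor H (Coalgebra.comul (R := K) h)) := by
    rw [← LinearMap.lTensor_comp_rTensor]; rfl
  rw [e1, stmt11Phi_last, Coalgebra.coassoc_apply]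
  have e3 : LinearMap.lTensor H ((TensorProduct.assoc K H H H).symm.toLinearMap ∘ₗ
        LinearMap.lTensor H (Coalgebra.comul (R := K)) ∘ₗ Coalgebra.comul (R := K))
      = LinearMap.lTensor H ((Coalgebra.comul (R := K) (A := H)).rTensor H ∘ₗ
        Coalgebra.comul (R := K)) := by
    rw [Coalgebra.coassoc_symm]
  rw [LinearMap.lTensor_comp, LinearMap.lTensor_comp, LinearMap.lTensor_comp] at e3
  have := LinearMap.congr_fun e3 (Coalgebra.comul (R := K) h)
  simpa using this

lemma stmt11L3 (h : H) :
    stmt11Phi K H (Coalgebra.comul (R := K) (Coalgebra.comul (R := K) h))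
    = LinearMap.lTensor H (LinearMap.rTensor H
        ((TensorProduct.comm K H H).toLinearMap ∘ₗ Coalgebra.comul (R := K)))
        (LinearMap.lTensor H (Coalgebra.comul (R := K)) (Coalgebra.comul (R := K) h)) := by
  have e0 : Coalgebra.comul (R := K) (A := H ⊗[K] H) (Coalgebra.comul (R := K) h)
      = TensorProduct.tensorTensorTensorComm K H H H H
          (TensorProduct.map (Coalgebra.comul (R := K)) (Coalgebra.comul (R := K))
            (Coalgebra.comul (R := K) h)) := rfl
  rw [e0, stmt11Phi_ttt, stmt11L2, ← LinearMap.comp_apply, ← LinearMap.lTensor_comp,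
    ← LinearMap.rTensor_comp]

lemma stmt11Key (Q : QuasiTriangular K H) (x : H ⊗[K] (H ⊗[K] H)) :
    (LinearMap.lTensor H (LinearMap.rTensor H
        ((TensorProduct.comm K H H).toLinearMap ∘ₗ Coalgebra.comul (R := K))) x)
        * ((1 : H) ⊗ₜ[K] (Q.R ⊗ₜ[K] (1 : H)))
    = ((1 : H) ⊗ₜ[K] (Q.R ⊗ₜ[K] (1 : H)))
        * (LinearMap.lTensor H (LinearMap.rTensor H (Coalgebra.comul (R := K))) x) := by
  induction x using TensorProduct.induction_on with
  | zero => rw [map_zero, map_zero, zero_mul, mul_zero]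
  | add a b ha hb => rw [map_add, map_add, add_mul, mul_add, ha, hb]
  | tmul a y =>
    induction y using TensorProduct.induction_on with
    | zero => rw [tmul_zero, map_zero, map_zero, zero_mul, mul_zero]
    | add c d hc hd => rw [tmul_add, map_add, map_add, add_mul, mul_add, hc, hd]
    | tmul m b =>
      rw [LinearMap.lTensor_tmul, LinearMap.lTensor_tmul, LinearMap.rTensor_tmul,
        LinearMap.rTensor_tmul, Algebra.TensorProduct.tmul_mul_tmul,
        Algebra.TensorProduct.tmul_mul_tmul, Algebra.TensorProduct.tmul_mul_tmul,
        Algebra.TensorProduct.tmul_mul_tmul]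
      simp only [LinearMap.comp_apply, LinearEquiv.coe_coe, mul_one, one_mul]
      rw [Q.compat m]

end Aux

/- STATEMENT 11 -/

set_option maxHeartbeats 1000000 in
set_option synthInstance.maxHeartbeats 400000 in
theorem stmt11 {K H : Type u} [Field K] [Ring H] [HopfAlgebra K H]
    (Q : QuasiTriangular K H)
    (J Ji : (H ⊗[K] H) ⊗[K] (H ⊗[K] H))
    (hJ : J = Algebra.TensorProduct.map
      (Algebra.TensorProduct.includeRight : H →ₐ[K] H ⊗[K] H)
      (Algebra.TensorProduct.includeLeft : H →ₐ[K] H ⊗[K] H) Q.R)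
    (hJi : Ji = Algebra.TensorProduct.map
      (Algebra.TensorProduct.includeRight : H →ₐ[K] H ⊗[K] H)
      (Algebra.TensorProduct.includeLeft : H →ₐ[K] H ⊗[K] H) Q.Rinv) :
    -- Δ is an algebra map into (H ⊗ H)_{R₂₃} (whose underlying algebra is H ⊗ H),
    (∀ a b : H, Coalgebra.comul (R := K) (a * b)
        = Coalgebra.comul (R := K) a * Coalgebra.comul (R := K) b)
    ∧ Coalgebra.comul (R := K) (1 : H) = 1
    -- and Δ intertwines Δ_H with the twisted comultiplication J⁻¹ Δ_{H⊗H} J: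
    ∧ ∀ h : H,
        Ji * Coalgebra.comul (R := K) (Coalgebra.comul (R := K) h) * J
          = TensorProduct.map (Coalgebra.comul (R := K)) (Coalgebra.comul (R := K))
              (Coalgebra.comul (R := K) h) := by
  refine ⟨fun a b => Bialgebra.comul_mul a b, Bialgebra.comul_one (R := K) (A := H), fun h => ?_⟩
  have hJiJ : Ji * J = 1 := by
    rw [hJ, hJi, ← map_mul, Q.inv_mul, map_one]
  have hCJ : Coalgebra.comul (R := K) (Coalgebra.comul (R := K) h) * J
      = J * TensorProduct.map (Coalgebra.comul (R := K)) (Coalgebra.comul (R := K))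
          (Coalgebra.comul (R := K) h) := by
    apply (stmt11Phi K H).injective
    rw [map_mul, map_mul, hJ, stmt11Phi_J, stmt11L3, stmt11L2]
    exact stmt11Key Q _
  rw [mul_assoc, hCJ, ← mul_assoc, hJiJ, one_mul]
end

section
/- Let (H, R) be a quasitriangular Hopf algebra and U ⊂ H a Hopf subalgebra with R ∈ U ⊗ U + H ⊗ [U,U]. Then for every m ≥ 1, U^{⊗m} is a right strongly coisotropic subalgebra of the twisted m-fold tensor product Hopf algebra H_R^{(m)} = (H^{⊗m})_{Twiᵐ(R)}, i.e. Δ_{H_R^{(m)}}(U^{⊗m}) ⊂ U^{⊗m} ⊗ U^{⊗m} + H^{⊗m} ⊗ [U^{⊗m}, U^{⊗m}]. -/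
open TensorProduct

universe u

/-- A bundled bialgebra over `K`. -/
structure BB (K : Type u) [Field K] : Type (u + 1) where
  T : Type u
  [ring : Ring T]
  [bi : Bialgebra K T]

attribute [instance] BB.ring BB.bi

variable (K H : Type u) [Field K] [Ring H] [HopfAlgebra K H]

/-- the iterated tensor power `H^{⊗n}` (with a copy of `K` at the left end). -/
noncomputable def TPb : ℕ → BB K
  | 0 => ⟨K⟩
  | n+1 => ⟨(TPb n).T ⊗[K] H⟩

/-- the iterated comultiplication `Δ^{(n)} : H → H^{⊗n}`. -/
noncomputable def Dm : (n : ℕ) → H →ₗ[K] (TPb K H n).T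
  | 0 => Coalgebra.counit
  | n+1 => TensorProduct.map (Dm n) LinearMap.id ∘ₗ Coalgebra.comul (R := K)

/-- the inductively defined twisting element `Twiⁿ(R) ∈ H^{⊗n} ⊗ H^{⊗n}`:
`Twi⁰ = 1` and `Twi^{n+1}(R) = Twiⁿ(R)·(Δ^{(n)} ⊗ I ⊗ Δ^{(n)} ⊗ I)(R₂₃)`. -/
noncomputable def Twi (R : H ⊗[K] H) : (n : ℕ) → (TPb K H n).T ⊗[K] (TPb K H n).T
  | 0 => 1
  | n+1 =>
    (Algebra.TensorProduct.map
      (Algebra.TensorProduct.includeLeft : (TPb K H n).T →ₐ[K] (TPb K H n).T ⊗[K] H)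
      (Algebra.TensorProduct.includeLeft : (TPb K H n).T →ₐ[K] (TPb K H n).T ⊗[K] H))
      (Twi R n)
    * (TensorProduct.map (TensorProduct.map (Dm K H n) LinearMap.id)
        (TensorProduct.map (Dm K H n) LinearMap.id))
      (Algebra.TensorProduct.map
        (Algebra.TensorProduct.includeRight : H →ₐ[K] H ⊗[K] H)
        (Algebra.TensorProduct.includeLeft : H →ₐ[K] H ⊗[K] H) R)

/-- the embedding of `H` into `H^{⊗n}` in the (1-based) `j`-th tensor position. -/
noncomputable def pos : (n : ℕ) → ℕ → (H →ₗ[K] (TPb K H n).T)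
  | 0, _ => 0
  | n+1, j =>
    if j = n + 1 then
      (Algebra.TensorProduct.includeRight : H →ₐ[K] (TPb K H n).T ⊗[K] H).toLinearMap
    else
      (Algebra.TensorProduct.includeLeft : (TPb K H n).T →ₐ[K] (TPb K H n).T ⊗[K] H).toLinearMap
        ∘ₗ pos n j

section defs2

variable (K : Type u) [Field K]

/-- the image of `p ⊗ q` in `M ⊗ N`, for submodules `p ⊆ M`, `q ⊆ N`. -/
noncomputable def tpSubM {M N : Type u} [AddCommMonoid M] [Module K M]
    [AddCommMonoid N] [Module K N] (p : Submodule K M) (q : Submodule K N) :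
    Submodule K (M ⊗[K] N) :=
  Submodule.map₂ (TensorProduct.mk K M N) p q

/-- the two-sided ideal generated by the commutators of a (subalgebra given as a)
submodule `S`, spanned by the elements `a(bc − cb)d` with `a,b,c,d ∈ S`. -/
def commIdealS {A : Type u} [Ring A] [Algebra K A] (S : Submodule K A) : Submodule K A :=
  Submodule.span K
    {z : A | ∃ a ∈ S, ∃ b ∈ S, ∃ c ∈ S, ∃ d ∈ S, z = a * (b * c - c * b) * d}

variable (H : Type u) [Ring H] [HopfAlgebra K H]

/-- `U^{⊗n} ⊆ H^{⊗n}` as a submodule. -/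
noncomputable def US (U : Subalgebra K H) : (n : ℕ) → Submodule K (TPb K H n).T
  | 0 => ⊤
  | n+1 => tpSubM K (US U n) U.toSubmodule

end defs2

/-! ### Auxiliary lemmas for `stmt18` -/

section auxBasic
variable {K : Type u} [Field K]

lemma tmul_mem_tpSubM {M N : Type u} [AddCommMonoid M] [Module K M] [AddCommMonoid N] [Module K N]
    {p : Submodule K M} {q : Submodule K N} {x : M} {y : N} (hx : x ∈ p) (hy : y ∈ q) :
    x ⊗ₜ[K] y ∈ tpSubM K p q :=
  Submodule.apply_mem_map₂ _ hx hy

lemma tpSubM_le {M N : Type u} [AddCommMonoid M] [Module K M] [AddCommMonoid N] [Module K N]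
    {p : Submodule K M} {q : Submodule K N} {r : Submodule K (M ⊗[K] N)}
    (h : ∀ x ∈ p, ∀ y ∈ q, x ⊗ₜ[K] y ∈ r) : tpSubM K p q ≤ r :=
  Submodule.map₂_le.mpr h

lemma tpSubM_mono {M N : Type u} [AddCommMonoid M] [Module K M] [AddCommMonoid N] [Module K N]
    {p p' : Submodule K M} {q q' : Submodule K N} (hp : p ≤ p') (hq : q ≤ q') :
    tpSubM K p q ≤ tpSubM K p' q' :=
  tpSubM_le fun x hx y hy => tmul_mem_tpSubM (hp hx) (hq hy)

lemma map_mem_tpSubM {M N M' N' : Type u} [AddCommMonoid M] [Module K M] [AddCommMonoid N]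
    [Module K N] [AddCommMonoid M'] [Module K M'] [AddCommMonoid N'] [Module K N']
    {p : Submodule K M} {q : Submodule K N} {p' : Submodule K M'} {q' : Submodule K N'}
    {f : M →ₗ[K] M'} {g : N →ₗ[K] N'} (hf : ∀ a ∈ p, f a ∈ p') (hg : ∀ b ∈ q, g b ∈ q')
    {x : M ⊗[K] N} (hx : x ∈ tpSubM K p q) : TensorProduct.map f g x ∈ tpSubM K p' q' := by
  have h : tpSubM K p q ≤ Submodule.comap (TensorProduct.map f g) (tpSubM K p' q') :=
    tpSubM_le fun a ha b hb => by
      simpa using tmul_mem_tpSubM (hf a ha) (hg b hb)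
  exact h hx

lemma ttc_mem_tpSubM {A A' B B' : Type u} [AddCommMonoid A] [Module K A] [AddCommMonoid A']
    [Module K A'] [AddCommMonoid B] [Module K B] [AddCommMonoid B'] [Module K B']
    {pA : Submodule K A} {qA : Submodule K A'} {pB : Submodule K B} {qB : Submodule K B'}
    {x : (A ⊗[K] A') ⊗[K] (B ⊗[K] B')}
    (hx : x ∈ tpSubM K (tpSubM K pA qA) (tpSubM K pB qB)) :
    TensorProduct.tensorTensorTensorComm K A A' B B' x
      ∈ tpSubM K (tpSubM K pA pB) (tpSubM K qA qB) := by
  set tgt := tpSubM K (tpSubM K pA pB) (tpSubM K qA qB) with htgt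
  have h : tpSubM K (tpSubM K pA qA) (tpSubM K pB qB) ≤
      Submodule.comap (TensorProduct.tensorTensorTensorComm K A A' B B' : _ →ₗ[K] _) tgt := by
    refine tpSubM_le fun x' hx' y' hy' => ?_
    have h2 : tpSubM K pA qA ≤ Submodule.comap
        ((TensorProduct.tensorTensorTensorComm K A A' B B' : _ →ₗ[K] _)
          ∘ₗ (TensorProduct.mk K (A ⊗[K] A') (B ⊗[K] B')).flip y') tgt := by
      refine tpSubM_le fun a1 ha1 a2 ha2 => ?_
      have h3 : tpSubM K pB qB ≤ Submodule.comap
          ((TensorProduct.tensorTensorTensorComm K A A' B B' : _ →ₗ[K] _)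
            ∘ₗ TensorProduct.mk K (A ⊗[K] A') (B ⊗[K] B') (a1 ⊗ₜ[K] a2)) tgt := by
        refine tpSubM_le fun b1 hb1 b2 hb2 => ?_
        simp only [Submodule.mem_comap, LinearMap.comp_apply, TensorProduct.mk_apply,
          LinearEquiv.coe_coe, TensorProduct.tensorTensorTensorComm_tmul]
        exact tmul_mem_tpSubM (tmul_mem_tpSubM ha1 hb1) (tmul_mem_tpSubM ha2 hb2)
      exact h3 hy'
    exact h2 hx'
  exact h hx

lemma tpSubM_mul_le {A B : Type u} [Ring A] [Algebra K A] [Ring B] [Algebra K B]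
    {p p' : Submodule K A} {q q' : Submodule K B} :
    tpSubM K p q * tpSubM K p' q' ≤ tpSubM K (p * p') (q * q') := by
  rw [Submodule.mul_le]
  intro x hx y hy
  have key : ∀ a ∈ p', ∀ b ∈ q', x * (a ⊗ₜ[K] b) ∈ tpSubM K (p * p') (q * q') := by
    intro a ha b hb
    have h2 : tpSubM K p q ≤
        Submodule.comap (LinearMap.mulRight K (a ⊗ₜ[K] b)) (tpSubM K (p * p') (q * q')) :=
      tpSubM_le fun u hu v hv => by
        simpa [Algebra.TensorProduct.tmul_mul_tmul] using
          tmul_mem_tpSubM (Submodule.mul_mem_mul hu ha) (Submodule.mul_mem_mul hv hb)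
    exact h2 hx
  have h1 : tpSubM K p' q' ≤
      Submodule.comap (LinearMap.mulLeft K x) (tpSubM K (p * p') (q * q')) :=
    tpSubM_le fun a ha b hb => key a ha b hb
  exact h1 hy

lemma mul_mem_tpSubM {A B : Type u} [Ring A] [Algebra K A] [Ring B] [Algebra K B]
    {p p' : Submodule K A} {q q' : Submodule K B} {x y : A ⊗[K] B}
    (hx : x ∈ tpSubM K p q) (hy : y ∈ tpSubM K p' q') :
    x * y ∈ tpSubM K (p * p') (q * q') :=
  tpSubM_mul_le (Submodule.mul_mem_mul hx hy)

section comm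
variable {A : Type u} [Ring A] [Algebra K A] {S : Submodule K A}

lemma commIdealS_le (hmul : ∀ x ∈ S, ∀ y ∈ S, x * y ∈ S) : commIdealS K S ≤ S := by
  rw [commIdealS, Submodule.span_le]
  rintro z ⟨a, ha, b, hb, c, hc, d, hd, rfl⟩
  exact hmul _ (hmul a ha _ (S.sub_mem (hmul b hb c hc) (hmul c hc b hb))) d hd

lemma mul_commIdealS_mem (hmul : ∀ x ∈ S, ∀ y ∈ S, x * y ∈ S)
    {u z : A} (hu : u ∈ S) (hz : z ∈ commIdealS K S) : u * z ∈ commIdealS K S := by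
  have h : commIdealS K S ≤ Submodule.comap (LinearMap.mulLeft K u) (commIdealS K S) := by
    rw [commIdealS, Submodule.span_le]
    rintro z ⟨a, ha, b, hb, c, hc, d, hd, rfl⟩
    exact Submodule.subset_span ⟨u * a, hmul u hu a ha, b, hb, c, hc, d, hd, by
      simp [mul_assoc]⟩
  exact h hz

lemma commIdealS_mul_mem (hmul : ∀ x ∈ S, ∀ y ∈ S, x * y ∈ S)
    {u z : A} (hu : u ∈ S) (hz : z ∈ commIdealS K S) : z * u ∈ commIdealS K S := by
  have h : commIdealS K S ≤ Submodule.comap (LinearMap.mulRight K u) (commIdealS K S) := by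
    rw [commIdealS, Submodule.span_le]
    rintro z ⟨a, ha, b, hb, c, hc, d, hd, rfl⟩
    exact Submodule.subset_span ⟨a, ha, b, hb, c, hc, d * u, hmul d hd u hu, by
      simp [mul_assoc]⟩
  exact h hz

lemma commIdealS_map {B : Type u} [Ring B] [Algebra K B] {S' : Submodule K B}
    (φ : A →ₐ[K] B) (h : ∀ x ∈ S, φ x ∈ S') {z : A} (hz : z ∈ commIdealS K S) :
    φ z ∈ commIdealS K S' := by
  have h2 : commIdealS K S ≤ Submodule.comap φ.toLinearMap (commIdealS K S') := by
    rw [commIdealS, Submodule.span_le]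
    rintro z ⟨a, ha, b, hb, c, hc, d, hd, rfl⟩
    exact Submodule.subset_span ⟨φ a, h a ha, φ b, h b hb, φ c, h c hc, φ d, h d hd, by
      simp [map_mul, map_sub]⟩
  exact h2 hz

end comm

/-- `W(S) = S ⊗ S + A ⊗ [S,S]`. -/
noncomputable def WS (K : Type u) [Field K] {A : Type u} [Ring A] [Algebra K A]
    (S : Submodule K A) : Submodule K (A ⊗[K] A) :=
  tpSubM K S S ⊔ tpSubM K ⊤ (commIdealS K S)

lemma WS_mul_mem {A : Type u} [Ring A] [Algebra K A] {S : Submodule K A}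
    (hmul : ∀ x ∈ S, ∀ y ∈ S, x * y ∈ S)
    {x y : A ⊗[K] A} (hx : x ∈ WS K S) (hy : y ∈ WS K S) : x * y ∈ WS K S := by
  have hSS : S * S ≤ S := Submodule.mul_le.mpr hmul
  have hC : commIdealS K S ≤ S := commIdealS_le hmul
  have hSC : S * commIdealS K S ≤ commIdealS K S :=
    Submodule.mul_le.mpr fun u hu z hz => mul_commIdealS_mem hmul hu hz
  have hCS : commIdealS K S * S ≤ commIdealS K S :=
    Submodule.mul_le.mpr fun z hz u hu => commIdealS_mul_mem hmul hu hz
  have hCC : commIdealS K S * commIdealS K S ≤ commIdealS K S :=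
    Submodule.mul_le.mpr fun z hz z' hz' => commIdealS_mul_mem hmul (hC hz') hz
  obtain ⟨x1, hx1, x2, hx2, rfl⟩ := Submodule.mem_sup.mp hx
  obtain ⟨y1, hy1, y2, hy2, rfl⟩ := Submodule.mem_sup.mp hy
  have t11 : x1 * y1 ∈ WS K S :=
    le_sup_left (α := Submodule K (A ⊗[K] A)) (b := tpSubM K ⊤ (commIdealS K S))
      (tpSubM_mono hSS hSS (mul_mem_tpSubM hx1 hy1))
  have t12 : x1 * y2 ∈ WS K S :=
    le_sup_right (α := Submodule K (A ⊗[K] A)) (a := tpSubM K S S)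
      (tpSubM_mono le_top hSC (mul_mem_tpSubM hx1 hy2))
  have t21 : x2 * y1 ∈ WS K S :=
    le_sup_right (α := Submodule K (A ⊗[K] A)) (a := tpSubM K S S)
      (tpSubM_mono le_top hCS (mul_mem_tpSubM hx2 hy1))
  have t22 : x2 * y2 ∈ WS K S :=
    le_sup_right (α := Submodule K (A ⊗[K] A)) (a := tpSubM K S S)
      (tpSubM_mono le_top hCC (mul_mem_tpSubM hx2 hy2))
  have hexp : (x1 + x2) * (y1 + y2) = x1 * y1 + x1 * y2 + x2 * y1 + x2 * y2 := by noncomm_ring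
  rw [hexp]
  exact add_mem (add_mem (add_mem t11 t12) t21) t22

lemma map_mem_WSlike {A B : Type u} [Ring A] [Algebra K A] [Ring B] [Algebra K B]
    {p q cA : Submodule K A} {p' q' cB : Submodule K B}
    {f g : A →ₗ[K] B} (hf : ∀ a ∈ p, f a ∈ p') (hg : ∀ b ∈ q, g b ∈ q')
    (hgc : ∀ b ∈ cA, g b ∈ cB)
    {x : A ⊗[K] A} (hx : x ∈ tpSubM K p q ⊔ tpSubM K ⊤ cA) :
    TensorProduct.map f g x ∈ tpSubM K p' q' ⊔ tpSubM K ⊤ cB := by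
  obtain ⟨x1, hx1, x2, hx2, rfl⟩ := Submodule.mem_sup.mp hx
  rw [map_add]
  exact add_mem
    (le_sup_left (α := Submodule K (B ⊗[K] B)) (b := tpSubM K ⊤ cB)
      (map_mem_tpSubM hf hg hx1))
    (le_sup_right (α := Submodule K (B ⊗[K] B)) (a := tpSubM K p' q')
      (map_mem_tpSubM (fun a _ => Submodule.mem_top) hgc hx2))

end auxBasic

section auxTP
variable {K H : Type u} [Field K] [Ring H] [HopfAlgebra K H]

/-- `Δ^{(n)}` as an algebra hom. -/
noncomputable def DmAlg (K H : Type u) [Field K] [Ring H] [HopfAlgebra K H] :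
    (n : ℕ) → H →ₐ[K] (TPb K H n).T
  | 0 => Bialgebra.counitAlgHom K H
  | n+1 => (Algebra.TensorProduct.map (DmAlg K H n) (AlgHom.id K H)).comp
      (Bialgebra.comulAlgHom K H)

lemma Dm_eq : ∀ n, Dm K H n = (DmAlg K H n).toLinearMap := by
  intro n
  induction n with
  | zero => rfl
  | succ n ih =>
    show TensorProduct.map (Dm K H n) LinearMap.id ∘ₗ Coalgebra.comul = _
    have h1 : TensorProduct.map (Dm K H n) LinearMap.id
        = (Algebra.TensorProduct.map (DmAlg K H n) (AlgHom.id K H)).toLinearMap := by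
      apply TensorProduct.ext'
      intro x y
      simp [ih]
    rw [h1]
    rfl

variable {U : Subalgebra K H}

lemma US_one : ∀ n, (1 : (TPb K H n).T) ∈ US K H U n
  | 0 => trivial
  | n+1 => by
    show (1 : (TPb K H n).T ⊗[K] H) ∈ tpSubM K (US K H U n) U.toSubmodule
    rw [Algebra.TensorProduct.one_def]
    exact tmul_mem_tpSubM (US_one n) U.one_mem

lemma US_mul : ∀ n, ∀ x ∈ US K H U n, ∀ y ∈ US K H U n, x * y ∈ US K H U n := by
  intro n
  induction n with
  | zero => intro x _ y _; trivial
  | succ n ih =>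
    intro x hx y hy
    exact tpSubM_mono (Submodule.mul_le.mpr ih)
      (Submodule.mul_le.mpr fun a ha b hb => U.mul_mem ha hb) (mul_mem_tpSubM hx hy)

lemma Dm_mem (hUΔ : ∀ u ∈ U, Coalgebra.comul (R := K) u ∈ tpSubM K U.toSubmodule U.toSubmodule) :
    ∀ n, ∀ u ∈ U, Dm K H n u ∈ US K H U n := by
  intro n
  induction n with
  | zero => intro u _; trivial
  | succ n ih =>
    intro u hu
    show TensorProduct.map (Dm K H n) LinearMap.id (Coalgebra.comul (R := K) u)
      ∈ tpSubM K (US K H U n) U.toSubmodule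
    exact map_mem_tpSubM ih (fun b hb => hb) (hUΔ u hu)

lemma comul_US (hUΔ : ∀ u ∈ U, Coalgebra.comul (R := K) u ∈ tpSubM K U.toSubmodule U.toSubmodule) :
    ∀ n, ∀ z ∈ US K H U n, Coalgebra.comul (R := K) z
      ∈ tpSubM K (US K H U n) (US K H U n) := by
  intro n
  induction n with
  | zero =>
    intro z _
    exact tmul_mem_tpSubM trivial trivial
  | succ n ih =>
    intro z hz
    have h : US K H U (n+1) ≤ Submodule.comap
        (Coalgebra.comul (R := K) (A := (TPb K H (n+1)).T))
        (tpSubM K (US K H U (n+1)) (US K H U (n+1))) := by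
      refine tpSubM_le fun a ha u hu => ?_
      show TensorProduct.tensorTensorTensorComm K _ _ _ _
          (TensorProduct.map (Coalgebra.comul (R := K)) (Coalgebra.comul (R := K)) (a ⊗ₜ[K] u))
        ∈ tpSubM K (US K H U (n+1)) (US K H U (n+1))
      rw [TensorProduct.map_tmul]
      exact ttc_mem_tpSubM (tmul_mem_tpSubM (ih a ha) (hUΔ u hu))
    exact h hz
end auxTP

section auxTwi
variable {K H : Type u} [Field K] [Ring H] [HopfAlgebra K H]

/-- the embedding `H^{⊗n} ⊗ H^{⊗n} → H^{⊗(n+1)} ⊗ H^{⊗(n+1)}`. -/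
noncomputable def iotaTw (K H : Type u) [Field K] [Ring H] [HopfAlgebra K H] (n : ℕ) :
    ((TPb K H n).T ⊗[K] (TPb K H n).T) →ₐ[K] ((TPb K H (n+1)).T ⊗[K] (TPb K H (n+1)).T) :=
  Algebra.TensorProduct.map
    (Algebra.TensorProduct.includeLeft : (TPb K H n).T →ₐ[K] (TPb K H n).T ⊗[K] H)
    (Algebra.TensorProduct.includeLeft : (TPb K H n).T →ₐ[K] (TPb K H n).T ⊗[K] H)

/-- the algebra hom `H ⊗ H → H^{⊗(n+1)} ⊗ H^{⊗(n+1)}` giving the new factor of the twist. -/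
noncomputable def psiTw (K H : Type u) [Field K] [Ring H] [HopfAlgebra K H] (n : ℕ) :
    (H ⊗[K] H) →ₐ[K] ((TPb K H (n+1)).T ⊗[K] (TPb K H (n+1)).T) :=
  Algebra.TensorProduct.map
    (Algebra.TensorProduct.includeRight : H →ₐ[K] (TPb K H n).T ⊗[K] H)
    ((Algebra.TensorProduct.includeLeft : (TPb K H n).T →ₐ[K] (TPb K H n).T ⊗[K] H).comp
      (DmAlg K H n))

lemma Twi_succ (R : H ⊗[K] H) (n : ℕ) :
    Twi K H R (n+1) = iotaTw K H n (Twi K H R n) * psiTw K H n R := by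
  show (Algebra.TensorProduct.map _ _) (Twi K H R n) * _ = _
  congr 1
  have h : (TensorProduct.map (TensorProduct.map (Dm K H n) LinearMap.id)
        (TensorProduct.map (Dm K H n) LinearMap.id)) ∘ₗ
        (Algebra.TensorProduct.map
          (Algebra.TensorProduct.includeRight : H →ₐ[K] H ⊗[K] H)
          (Algebra.TensorProduct.includeLeft : H →ₐ[K] H ⊗[K] H)).toLinearMap
      = (psiTw K H n).toLinearMap := by
    apply TensorProduct.ext'
    intro x y
    have hRHS : (psiTw K H n).toLinearMap (x ⊗ₜ[K] y)
        = ((1 : (TPb K H n).T) ⊗ₜ[K] x) ⊗ₜ[K] ((DmAlg K H n) y ⊗ₜ[K] (1 : H)) := rfl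
    refine Eq.trans ?_ hRHS.symm
    simp [Dm_eq]
  exact LinearMap.congr_fun h R

/-- the inverse twist. -/
noncomputable def TwiInv (K H : Type u) [Field K] [Ring H] [HopfAlgebra K H] (Ri : H ⊗[K] H) :
    (n : ℕ) → (TPb K H n).T ⊗[K] (TPb K H n).T
  | 0 => 1
  | n+1 => psiTw K H n Ri * iotaTw K H n (TwiInv K H Ri n)

lemma Twi_TwiInv {R Ri : H ⊗[K] H} (h : R * Ri = 1) (h' : Ri * R = 1) :
    ∀ n, Twi K H R n * TwiInv K H Ri n = 1 ∧ TwiInv K H Ri n * Twi K H R n = 1 := by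
  intro n
  induction n with
  | zero => constructor <;> simp [Twi, TwiInv]
  | succ n ih =>
    rw [Twi_succ]
    show _ ∧ (psiTw K H n Ri * iotaTw K H n (TwiInv K H Ri n)) * _ = 1
    constructor
    · calc (iotaTw K H n (Twi K H R n) * psiTw K H n R) *
            (psiTw K H n Ri * iotaTw K H n (TwiInv K H Ri n))
          = iotaTw K H n (Twi K H R n) * (psiTw K H n R * psiTw K H n Ri) *
            iotaTw K H n (TwiInv K H Ri n) := by noncomm_ring
      _ = 1 := by
          rw [← map_mul, h, map_one, mul_one, ← map_mul, ih.1, map_one]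
    · calc (psiTw K H n Ri * iotaTw K H n (TwiInv K H Ri n)) *
            (iotaTw K H n (Twi K H R n) * psiTw K H n R)
          = psiTw K H n Ri * (iotaTw K H n (TwiInv K H Ri n) * iotaTw K H n (Twi K H R n)) *
            psiTw K H n R := by noncomm_ring
      _ = 1 := by
          rw [← map_mul, ih.2, map_one, mul_one, ← map_mul, h', map_one]

variable {U : Subalgebra K H}

lemma iotaTw_memW (n : ℕ) {x : (TPb K H n).T ⊗[K] (TPb K H n).T}
    (hx : x ∈ WS K (US K H U n)) : iotaTw K H n x ∈ WS K (US K H U (n+1)) := by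
  have hf : ∀ a ∈ US K H U n,
      (Algebra.TensorProduct.includeLeft : (TPb K H n).T →ₐ[K] (TPb K H n).T ⊗[K] H) a
        ∈ US K H U (n+1) := by
    intro a ha
    exact tmul_mem_tpSubM ha U.one_mem
  have hgc : ∀ b ∈ commIdealS K (US K H U n),
      (Algebra.TensorProduct.includeLeft : (TPb K H n).T →ₐ[K] (TPb K H n).T ⊗[K] H) b
        ∈ commIdealS K (US K H U (n+1)) :=
    fun b hb => commIdealS_map _ hf hb
  exact map_mem_WSlike hf hf hgc hx

lemma psiTw_memW (hUΔ : ∀ u ∈ U, Coalgebra.comul (R := K) u ∈ tpSubM K U.toSubmodule U.toSubmodule)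
    (n : ℕ) {x : H ⊗[K] H} (hx : x ∈ WS K U.toSubmodule) :
    psiTw K H n x ∈ WS K (US K H U (n+1)) := by
  have hf : ∀ a ∈ U.toSubmodule,
      (Algebra.TensorProduct.includeRight : H →ₐ[K] (TPb K H n).T ⊗[K] H) a
        ∈ US K H U (n+1) := by
    intro a ha
    exact tmul_mem_tpSubM (US_one n) ha
  have hg : ∀ b ∈ U.toSubmodule,
      ((Algebra.TensorProduct.includeLeft :
          (TPb K H n).T →ₐ[K] (TPb K H n).T ⊗[K] H).comp (DmAlg K H n)) b
        ∈ US K H U (n+1) := by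
    intro b hb
    have hD : DmAlg K H n b ∈ US K H U n := by
      have := Dm_mem hUΔ n b hb
      rwa [Dm_eq] at this
    exact tmul_mem_tpSubM hD U.one_mem
  have hgc : ∀ b ∈ commIdealS K U.toSubmodule,
      ((Algebra.TensorProduct.includeLeft :
          (TPb K H n).T →ₐ[K] (TPb K H n).T ⊗[K] H).comp (DmAlg K H n)) b
        ∈ commIdealS K (US K H U (n+1)) :=
    fun b hb => commIdealS_map _ hg hb
  exact map_mem_WSlike hf hg hgc hx

lemma Twi_memW (hUΔ : ∀ u ∈ U, Coalgebra.comul (R := K) u ∈ tpSubM K U.toSubmodule U.toSubmodule)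
    {R : H ⊗[K] H} (hRW : R ∈ WS K U.toSubmodule) :
    ∀ n, Twi K H R n ∈ WS K (US K H U n) := by
  intro n
  induction n with
  | zero =>
    show (1 : K ⊗[K] K) ∈ _
    rw [Algebra.TensorProduct.one_def]
    exact le_sup_left (α := Submodule K (K ⊗[K] K)) (b := tpSubM K ⊤ (commIdealS K (US K H U 0)))
      (tmul_mem_tpSubM (US_one 0) (US_one 0))
  | succ n ih =>
    rw [Twi_succ]
    exact WS_mul_mem (US_mul (n+1)) (iotaTw_memW n ih) (psiTw_memW hUΔ n hRW)

lemma TwiInv_memW (hUΔ : ∀ u ∈ U, Coalgebra.comul (R := K) u ∈ tpSubM K U.toSubmodule U.toSubmodule)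
    {Ri : H ⊗[K] H} (hRW : Ri ∈ WS K U.toSubmodule) :
    ∀ n, TwiInv K H Ri n ∈ WS K (US K H U n) := by
  intro n
  induction n with
  | zero =>
    show (1 : K ⊗[K] K) ∈ _
    rw [Algebra.TensorProduct.one_def]
    exact le_sup_left (α := Submodule K (K ⊗[K] K)) (b := tpSubM K ⊤ (commIdealS K (US K H U 0)))
      (tmul_mem_tpSubM (US_one 0) (US_one 0))
  | succ n ih =>
    show psiTw K H n Ri * iotaTw K H n (TwiInv K H Ri n) ∈ _
    exact WS_mul_mem (US_mul (n+1)) (psiTw_memW hUΔ n hRW) (iotaTw_memW n ih)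

end auxTwi

section auxRinv
variable {K H : Type u} [Field K] [Ring H] [HopfAlgebra K H]

lemma hexEval (φ : H →ₗ[K] H) (x y : H ⊗[K] H) :
    LinearMap.rTensor H (LinearMap.mul' K H ∘ₗ LinearMap.rTensor H φ)
      ((Algebra.TensorProduct.assoc K K K H H H).symm
        ((Algebra.TensorProduct.map (AlgHom.id K H) Algebra.TensorProduct.includeRight x)
          * ((Algebra.TensorProduct.includeRight : (H ⊗[K] H) →ₐ[K] H ⊗[K] (H ⊗[K] H)) y)))
    = (LinearMap.rTensor H φ x) * y := by
  induction x using TensorProduct.induction_on with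
  | zero => simp
  | tmul a b =>
    induction y using TensorProduct.induction_on with
    | zero => simp
    | tmul c d =>
      simp only [Algebra.TensorProduct.map_tmul, AlgHom.coe_id, id_eq,
        Algebra.TensorProduct.includeRight_apply, Algebra.TensorProduct.tmul_mul_tmul,
        one_mul, mul_one, Algebra.TensorProduct.assoc_symm_tmul, LinearMap.rTensor_tmul,
        LinearMap.coe_comp, Function.comp_apply, LinearMap.mul'_apply]
    | add y1 y2 hy1 hy2 =>
      simp only [map_add, mul_add, hy1, hy2]
  | add x1 x2 h1 h2 =>
    simp only [map_add, add_mul, h1, h2]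

lemma hexKey (Q : QuasiTriangular K H) (φ : H →ₗ[K] H) :
    LinearMap.rTensor H ((LinearMap.mul' K H ∘ₗ LinearMap.rTensor H φ)
        ∘ₗ Coalgebra.comul (R := K)) Q.R
      = (LinearMap.rTensor H φ Q.R) * Q.R := by
  have h2 : LinearMap.rTensor H (Coalgebra.comul (R := K) (A := H)) Q.R
      = (Algebra.TensorProduct.assoc K K K H H H).symm
        ((Algebra.TensorProduct.map (AlgHom.id K H) Algebra.TensorProduct.includeRight Q.R)
          * ((Algebra.TensorProduct.includeRight : (H ⊗[K] H) →ₐ[K] H ⊗[K] (H ⊗[K] H)) Q.R)) := by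
    rw [← Q.hex2]
    exact (AlgEquiv.symm_apply_apply _ _).symm
  rw [LinearMap.rTensor_comp, LinearMap.comp_apply, h2]
  exact hexEval φ Q.R Q.R

lemma counit_leg_one (Q : QuasiTriangular K H) :
    LinearMap.rTensor H ((Algebra.linearMap K H) ∘ₗ Coalgebra.counit (R := K)) Q.R = 1 := by
  have hφ : (LinearMap.mul' K H ∘ₗ
      LinearMap.rTensor H ((Algebra.linearMap K H) ∘ₗ Coalgebra.counit (R := K)))
        ∘ₗ Coalgebra.comul (R := K) = LinearMap.id := by
    ext a
    have h1 : LinearMap.rTensor H ((Algebra.linearMap K H) ∘ₗ Coalgebra.counit (R := K))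
        (Coalgebra.comul (R := K) a)
        = LinearMap.rTensor H (Algebra.linearMap K H)
            (LinearMap.rTensor H (Coalgebra.counit (R := K)) (Coalgebra.comul (R := K) a)) := by
      rw [← LinearMap.rTensor_comp_apply]
    rw [LinearMap.comp_apply, LinearMap.comp_apply, h1, Coalgebra.rTensor_counit_comul]
    simp [LinearMap.mul'_apply]
  have hk := hexKey Q ((Algebra.linearMap K H) ∘ₗ Coalgebra.counit (R := K))
  rw [hφ] at hk
  simp only [LinearMap.rTensor_id, LinearMap.id_apply] at hk
  -- hk : Q.R = rTensor φ₀ Q.R * Q.R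
  have := congrArg (· * Q.Rinv) hk
  simp only [mul_assoc, Q.mul_inv, mul_one] at this
  exact this.symm

lemma rTensor_antipode_eq_Rinv (Q : QuasiTriangular K H) :
    LinearMap.rTensor H (HopfAlgebra.antipode (R := K)) Q.R = Q.Rinv := by
  have hk := hexKey Q (HopfAlgebra.antipode (R := K))
  have hcomp : (LinearMap.mul' K H ∘ₗ LinearMap.rTensor H (HopfAlgebra.antipode (R := K)))
      ∘ₗ Coalgebra.comul (R := K) = (Algebra.linearMap K H) ∘ₗ Coalgebra.counit (R := K) := by
    rw [LinearMap.comp_assoc]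
    exact HopfAlgebra.mul_antipode_rTensor_comul
  rw [hcomp, counit_leg_one Q] at hk
  -- hk : 1 = rTensor antipode Q.R * Q.R
  have := congrArg (· * Q.Rinv) hk
  simp only [mul_assoc, Q.mul_inv, mul_one, one_mul] at this
  exact this.symm

end auxRinv

/- STATEMENT 18: if (H, R) is quasitriangular and U ⊆ H is a Hopf subalgebra with
R ∈ U ⊗ U + H ⊗ [U,U], then for every m ≥ 1, U^{⊗m} is a right strongly coisotropic
subalgebra of the twisted m-fold tensor product H_R^{(m)} = (H^{⊗m})_{Twiᵐ(R)} :
Δ_{H_R^{(m)}}(U^{⊗m}) ⊆ U^{⊗m} ⊗ U^{⊗m} + H^{⊗m} ⊗ [U^{⊗m}, U^{⊗m}]. -/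

theorem stmt18 {K H : Type u} [Field K] [Ring H] [HopfAlgebra K H]
    (Q : QuasiTriangular K H)
    -- U is a Hopf subalgebra of H
    (U : Subalgebra K H)
    (hUΔ : ∀ u ∈ U, Coalgebra.comul (R := K) u ∈ tpSubM K U.toSubmodule U.toSubmodule)
    (hUS : ∀ u ∈ U, HopfAlgebra.antipode (R := K) u ∈ U)
    -- with R ∈ U ⊗ U + H ⊗ [U,U]
    (hR : Q.R ∈ tpSubM K U.toSubmodule U.toSubmodule
      ⊔ tpSubM K ⊤ (commIdealS K U.toSubmodule))
    (m : ℕ) (hm : 1 ≤ m) :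
    -- U^{⊗m} is right strongly coisotropic in (H^{⊗m})_{Twiᵐ(R)}, whose
    -- comultiplication is Δ_J = J⁻¹ Δ_{H^{⊗m}} J with J = Twiᵐ(R):
    ∀ z ∈ US K H U m, ∀ Ji : (TPb K H m).T ⊗[K] (TPb K H m).T,
      Twi K H Q.R m * Ji = 1 → Ji * Twi K H Q.R m = 1 →
      Ji * Coalgebra.comul (R := K) z * Twi K H Q.R m ∈
        tpSubM K (US K H U m) (US K H U m)
          ⊔ tpSubM K ⊤ (commIdealS K (US K H U m)) := by
  intro z hz Ji h1 h2
  have hRW : Q.R ∈ WS K U.toSubmodule := hR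
  have hRinvW : Q.Rinv ∈ WS K U.toSubmodule := by
    rw [← rTensor_antipode_eq_Rinv Q]
    exact map_mem_WSlike (f := HopfAlgebra.antipode (R := K)) (g := LinearMap.id)
      (fun a ha => hUS a ha) (fun b hb => hb) (fun b hb => hb) hR
  have hJi : Ji = TwiInv K H Q.Rinv m := by
    have h3 := (Twi_TwiInv Q.mul_inv Q.inv_mul m).1
    calc Ji = Ji * (Twi K H Q.R m * TwiInv K H Q.Rinv m) := by rw [h3, mul_one]
    _ = (Ji * Twi K H Q.R m) * TwiInv K H Q.Rinv m := by rw [mul_assoc]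
    _ = TwiInv K H Q.Rinv m := by rw [h2, one_mul]
  rw [hJi]
  have hTwiW : Twi K H Q.R m ∈ WS K (US K H U m) := Twi_memW hUΔ hRW m
  have hTwiInvW : TwiInv K H Q.Rinv m ∈ WS K (US K H U m) := TwiInv_memW hUΔ hRinvW m
  have hcom : Coalgebra.comul (R := K) z ∈ WS K (US K H U m) :=
    le_sup_left (α := Submodule K ((TPb K H m).T ⊗[K] (TPb K H m).T))
      (b := tpSubM K ⊤ (commIdealS K (US K H U m))) (comul_US hUΔ m z hz)
  exact WS_mul_mem (US_mul m) (WS_mul_mem (US_mul m) hTwiInvW hcom) hTwiW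
end
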